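/- arXiv:2202.08336 — 3 statements merged into one kernel-verified Lean document; each statement's English description precedes it below -/
import Mathlib

section
/- Let a<0<b be real numbers and let (X_N)_{N∈ℕ} be real random variables such that for every N the Laplace transform z ↦ 𝔼[e^{zX_N}] is finite and holomorphic on the strip D = {z∈ℂ : a<Re(z)<b}. Suppose t_N → +∞ and that Ψ_N(z) := 𝔼[e^{zX_N}]·e^{−t_N z²/2} converges locally uniformly on D to a holomorphic function Ψ with Ψ(0)=1. Let h ∈ (a,b) be real with Ψ(h)≠0, and let X_{N,h} have the exponentially tilted law ℙ_{N,h}(dx) = (e^{hx}/𝔼[e^{hX_N}])·ℙ_N(dx), where ℙ_N is the law of X_N. Then 𝔼[e^{z(X_{N,h}−t_N h)}]·e^{−t_N z²/2} converges locally uniformly on the strip {z : a−h<Re(z)<b−h} to Ψ(z+h)/Ψ(h). -/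
open MeasureTheory Filter
open scoped NNReal ENNReal

/-- Locally uniform convergence is stable under multiplication by a convergent
sequence of constants, provided the limit function is continuous on the set. -/
lemma tlu_mul_const {f : ℕ → ℂ → ℂ} {g : ℂ → ℂ} {s : Set ℂ}
    (hf : TendstoLocallyUniformlyOn f g atTop s) (hg : ContinuousOn g s)
    {c : ℕ → ℂ} {c₀ : ℂ} (hc : Tendsto c atTop (nhds c₀)) :
    TendstoLocallyUniformlyOn (fun N z => f N z * c N) (fun z => g z * c₀) atTop s := by
  rw [Metric.tendstoLocallyUniformlyOn_iff] at hf ⊢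
  intro ε hε x hx
  set M : ℝ := ‖c₀‖ + 1 with hM
  have hM0 : 0 < M := by positivity
  set B : ℝ := ‖g x‖ + 1 with hB
  have hB0 : 0 < B := by positivity
  have hgx : ContinuousWithinAt g s x := hg x hx
  have h1 : ∀ᶠ y in nhdsWithin x s, ‖g y‖ < B :=
    hgx.norm.eventually_lt_const (by simp [hB])
  obtain ⟨t₁, ht₁, ht₁'⟩ := eventually_iff_exists_mem.mp h1
  obtain ⟨t₂, ht₂, ht₂'⟩ := hf (ε / (3 * M)) (by positivity) x hx
  refine ⟨t₁ ∩ t₂, Filter.inter_mem ht₁ ht₂, ?_⟩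
  have hcM : ∀ᶠ N in atTop, ‖c N‖ < M :=
    hc.norm.eventually_lt_const (by simp [hM])
  have hcε : ∀ᶠ N in atTop, dist (c N) c₀ < ε / (3 * B) :=
    Metric.tendsto_nhds.mp hc _ (by positivity)
  filter_upwards [ht₂', hcM, hcε] with N hN hNM hNε y hy
  have h2 : dist (g y) (f N y) < ε / (3 * M) := hN y hy.2
  have h3 : ‖g y‖ < B := ht₁' y hy.1
  rw [dist_comm] at hNε
  have key : dist (g y * c₀) (f N y * c N) ≤
      dist (g y) (f N y) * ‖c N‖ + ‖g y‖ * dist c₀ (c N) := by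
    have hrw : g y * c₀ - f N y * c N = (g y - f N y) * c N + g y * (c₀ - c N) := by ring
    calc dist (g y * c₀) (f N y * c N) = ‖(g y - f N y) * c N + g y * (c₀ - c N)‖ := by
            rw [dist_eq_norm, hrw]
      _ ≤ ‖(g y - f N y) * c N‖ + ‖g y * (c₀ - c N)‖ := norm_add_le _ _
      _ = dist (g y) (f N y) * ‖c N‖ + ‖g y‖ * dist c₀ (c N) := by
            rw [norm_mul, norm_mul, dist_eq_norm, dist_eq_norm]
  have b1 : dist (g y) (f N y) * ‖c N‖ ≤ (ε / (3 * M)) * M :=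
    mul_le_mul h2.le hNM.le (norm_nonneg _) (by positivity)
  have b2 : ‖g y‖ * dist c₀ (c N) ≤ B * (ε / (3 * B)) :=
    mul_le_mul h3.le hNε.le dist_nonneg hB0.le
  have h4 : ε / (3 * M) * M = ε / 3 := by field_simp
  have h5 : B * (ε / (3 * B)) = ε / 3 := by field_simp
  linarith [key, b1, b2]

/-- Mod-Gaussian convergence and exponential tilting of measures (Lemma 1.4):
if `(X_N)` (with laws `μ N`) converges in the mod-Gaussian sense on the strip
`{a < Re z < b}` with parameters `t N` and limit `Ψ`, and `h ∈ (a,b)` is real with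
`Ψ(h) ≠ 0`, then the tilted and recentered sequence `X_{N,h} - t_N h` (with laws `ν N`)
converges in the mod-Gaussian sense on `{a - h < Re z < b - h}` with limit
`z ↦ Ψ(z+h)/Ψ(h)`. -/
theorem mod_gaussian_tilting (a b : ℝ) (ha : a < 0) (hb : 0 < b)
    (μ : ℕ → Measure ℝ) (hprob : ∀ N, IsProbabilityMeasure (μ N))
    (t : ℕ → ℝ) (ht : Tendsto t atTop atTop)
    (hint : ∀ N, ∀ z : ℂ, a < z.re → z.re < b →
      Integrable (fun x : ℝ => Complex.exp (z * x)) (μ N))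
    (hhol : ∀ N, DifferentiableOn ℂ (fun z => ∫ x : ℝ, Complex.exp (z * x) ∂(μ N))
      {z : ℂ | a < z.re ∧ z.re < b})
    (Ψ : ℂ → ℂ)
    (hΨhol : DifferentiableOn ℂ Ψ {z : ℂ | a < z.re ∧ z.re < b})
    (hΨ0 : Ψ 0 = 1)
    (hconv : TendstoLocallyUniformlyOn
      (fun N z => (∫ x : ℝ, Complex.exp (z * x) ∂(μ N)) * Complex.exp (-(t N : ℂ) * z ^ 2 / 2))
      Ψ atTop {z : ℂ | a < z.re ∧ z.re < b})
    (h : ℝ) (hha : a < h) (hhb : h < b) (hΨh : Ψ (h : ℂ) ≠ 0)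
    (ν : ℕ → Measure ℝ)
    (hν : ∀ N, ν N = (ENNReal.ofReal (∫ x : ℝ, Real.exp (h * x) ∂(μ N)))⁻¹ •
      (μ N).withDensity (fun x => ENNReal.ofReal (Real.exp (h * x)))) :
    TendstoLocallyUniformlyOn
      (fun N z => (∫ x : ℝ, Complex.exp (z * ((x : ℂ) - t N * h)) ∂(ν N))
        * Complex.exp (-(t N : ℂ) * z ^ 2 / 2))
      (fun z => Ψ (z + h) / Ψ (h : ℂ)) atTop
      {z : ℂ | a - h < z.re ∧ z.re < b - h} := by
  set S : Set ℂ := {z : ℂ | a < z.re ∧ z.re < b}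
  set T : Set ℂ := {z : ℂ | a - h < z.re ∧ z.re < b - h}
  set L : ℕ → ℂ → ℂ := fun N w => ∫ x : ℝ, Complex.exp (w * x) ∂(μ N) with hL
  set ΨN : ℕ → ℂ → ℂ := fun N w => L N w * Complex.exp (-(t N : ℂ) * w ^ 2 / 2) with hΨN
  have hcast : ∀ x : ℝ, (Real.exp (h * x) : ℂ) = Complex.exp ((h : ℂ) * x) := by
    intro x
    rw [← Complex.ofReal_mul, Complex.ofReal_exp]
  -- positivity of the real normalizing constant
  have hc : ∀ N, 0 < ∫ x : ℝ, Real.exp (h * x) ∂(μ N) := by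
    intro N
    have hi : Integrable (fun x : ℝ => Real.exp (h * x)) (μ N) := by
      have h0 := hint N (h : ℂ) (by simpa using hha) (by simpa using hhb)
      have := h0.re
      simpa [← Complex.ofReal_mul, Complex.exp_ofReal_re] using this
    rw [integral_pos_iff_support_of_nonneg (fun x => (Real.exp_pos _).le) hi]
    have hsupp : Function.support (fun x : ℝ => Real.exp (h * x)) = Set.univ := by
      ext x; simp [Function.mem_support, (Real.exp_pos _).ne']
    rw [hsupp]
    simp [(hprob N).measure_univ]
  -- the key identity: the tilted integrand equals ΨN (z+h) * (ΨN h)⁻¹ on T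
  have key : ∀ N, Set.EqOn
      (fun z => (∫ x : ℝ, Complex.exp (z * ((x : ℂ) - t N * h)) ∂(ν N))
        * Complex.exp (-(t N : ℂ) * z ^ 2 / 2))
      (fun z => ΨN N (z + h) * (ΨN N (h : ℂ))⁻¹) T := by
    intro N z hz
    set c : ℝ := ∫ x : ℝ, Real.exp (h * x) ∂(μ N) with hcdef
    have hc0 : 0 < c := hc N
    have hLh : L N (h : ℂ) = (c : ℂ) := by
      rw [hL]
      simp only
      calc (∫ x : ℝ, Complex.exp ((h : ℂ) * x) ∂(μ N))
          = ∫ x : ℝ, ((Real.exp (h * x) : ℝ) : ℂ) ∂(μ N) :=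
            integral_congr_ae (Filter.Eventually.of_forall fun x => (hcast x).symm)
        _ = ((∫ x : ℝ, Real.exp (h * x) ∂(μ N) : ℝ) : ℂ) := integral_ofReal
    have hmeas : Measurable (fun x : ℝ => Real.toNNReal (Real.exp (h * x))) :=
      (Real.measurable_exp.comp (measurable_id.const_mul h)).real_toNNReal
    have hwd : ((μ N).withDensity (fun x => ENNReal.ofReal (Real.exp (h * x)))) =
        ((μ N).withDensity (fun x => ((Real.toNNReal (Real.exp (h * x)) : ℝ≥0) : ℝ≥0∞))) := rfl
    have hint1 : (∫ x : ℝ, Complex.exp (z * ((x : ℂ) - t N * h)) ∂(ν N)) =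
        (c⁻¹ : ℝ) • ∫ x : ℝ, Real.exp (h * x) • Complex.exp (z * ((x : ℂ) - t N * h)) ∂(μ N) := by
      rw [hν N, integral_smul_measure, hwd, integral_withDensity_eq_integral_smul hmeas]
      congr 1
      · rw [ENNReal.toReal_inv, ENNReal.toReal_ofReal hc0.le]
      · apply integral_congr_ae
        filter_upwards with x
        rw [NNReal.smul_def, Real.coe_toNNReal _ (Real.exp_pos _).le]
    have hint2 : (∫ x : ℝ, Real.exp (h * x) • Complex.exp (z * ((x : ℂ) - t N * h)) ∂(μ N)) =
        Complex.exp (-(z * t N * h)) * L N (z + h) := by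
      rw [hL]
      simp only
      rw [← integral_const_mul]
      apply integral_congr_ae
      filter_upwards with x
      rw [Complex.real_smul, hcast, ← Complex.exp_add, ← Complex.exp_add]
      congr 1
      ring
    simp only
    rw [hint1, hint2, Complex.real_smul]
    simp only [hΨN, hLh]
    push_cast
    rw [mul_inv, ← Complex.exp_neg]
    have e1 : Complex.exp (-(z * (t N : ℂ) * (h : ℂ))) * Complex.exp (-(t N : ℂ) * z ^ 2 / 2)
        = Complex.exp (-(t N : ℂ) * (z + (h : ℂ)) ^ 2 / 2)
          * Complex.exp (-(-(t N : ℂ) * (h : ℂ) ^ 2 / 2)) := by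
      rw [← Complex.exp_add, ← Complex.exp_add]
      congr 1
      ring
    linear_combination ((c : ℂ))⁻¹ * (L N (z + (h : ℂ))) * e1
  -- convergence of the translated sequence
  have hmaps : Set.MapsTo (fun z : ℂ => z + h) T S := by
    intro z hz
    simp only [S, T, Set.mem_setOf_eq, Complex.add_re, Complex.ofReal_re] at *
    constructor
    · linarith [hz.1]
    · linarith [hz.2]
  have htrans : TendstoLocallyUniformlyOn (fun N z => ΨN N (z + h))
      (fun z => Ψ (z + h)) atTop T :=
    hconv.comp (fun z : ℂ => z + h) hmaps (by fun_prop)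
  -- convergence of the constants
  have hSh : (h : ℂ) ∈ S := ⟨by simpa using hha, by simpa using hhb⟩
  have hch : Tendsto (fun N => ΨN N (h : ℂ)) atTop (nhds (Ψ (h : ℂ))) :=
    hconv.tendsto_at hSh
  have hcinv : Tendsto (fun N => (ΨN N (h : ℂ))⁻¹) atTop (nhds ((Ψ (h : ℂ))⁻¹)) :=
    hch.inv₀ hΨh
  -- continuity of the limit
  have hcont : ContinuousOn (fun z => Ψ (z + h)) T :=
    (hΨhol.continuousOn).comp (by fun_prop) hmaps
  have hfin := (tlu_mul_const htrans hcont hcinv).congr (fun N => (key N).symm)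
  exact hfin.congr_right (fun z hz => (div_eq_mul_inv _ _).symm)
end

section
/- For every β>0, every integer N≥1 and every real z>0: Λ_{N,β}(z) = β'·Λ_{N,2}(z/β') + ((β'−1)/2)·(2·ℓ(N+z/(2β')) − ℓ(N) − ℓ(N+z/β')) + m(z) − ((β'+1)/2)·m(z/β') + ∫₀^∞ ((1−e^{−sβ'(N−1)})/(1−e^{−sβ'}))·(1−e^{−sz/2})²·e^{−sβ'}·φ_β(s) ds. -/
open MeasureTheory Filter

noncomputable section

namespace CbetaE

/-- The "free energy": real part of the log-characteristic polynomial at 1. -/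
def XN (N : ℕ) (θ : Fin N → ℝ) : ℝ :=
  Real.log ‖∏ i, (1 - Complex.exp (θ i * Complex.I))‖

/-- Unnormalized density of the circular Jacobi `(β, δ)` ensemble. -/
def jacobiDensity (β δ : ℝ) (N : ℕ) (θ : Fin N → ℝ) : ℝ :=
  (∏ p ∈ Finset.univ.filter (fun p : Fin N × Fin N => p.1 < p.2),
      ‖Complex.exp (θ p.1 * Complex.I) - Complex.exp (θ p.2 * Complex.I)‖ ^ β)
  * ∏ i, ‖1 - Complex.exp (θ i * Complex.I)‖ ^ (2 * δ)

/-- Unnormalized circular Jacobi `(β, δ)` measure on `[0, 2π)^N`. -/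
def jacobiRaw (β δ : ℝ) (N : ℕ) : Measure (Fin N → ℝ) :=
  ((volume : Measure (Fin N → ℝ)).restrict
      {θ | ∀ i, θ i ∈ Set.Ico (0 : ℝ) (2 * Real.pi)}).withDensity
    fun θ => ENNReal.ofReal (jacobiDensity β δ N θ)

/-- The circular Jacobi `(β, δ)` ensemble: normalized probability measure. -/
def jacobi (β δ : ℝ) (N : ℕ) : Measure (Fin N → ℝ) :=
  (jacobiRaw β δ N Set.univ)⁻¹ • jacobiRaw β δ N

/-- The circular `β` ensemble `ℙ_β` of order `N`. -/
def cbe (β : ℝ) (N : ℕ) : Measure (Fin N → ℝ) := jacobi β 0 N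

/-- `ℙ_β[X_N ≥ x]`. -/
def tailP (β : ℝ) (N : ℕ) (x : ℝ) : ℝ := (cbe β N {θ | x ≤ XN N θ}).toReal

/-- Log-Laplace transform `Λ_{N,β}(z)` of `X_N` under `ℙ_β` (real argument `z > -1`). -/
def Lam (β : ℝ) (N : ℕ) (z : ℝ) : ℝ :=
  ∑ k ∈ Finset.range N,
    (Real.log (Real.Gamma (β / 2 * k + 1)) + Real.log (Real.Gamma (β / 2 * k + 1 + z))
      - 2 * Real.log (Real.Gamma (β / 2 * k + 1 + z / 2)))

/-- Legendre–Fenchel transform `Λ*_{N,β}(x) = sup_{h > -1} (x h - Λ_{N,β}(h))`. -/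
def LamStar (β : ℝ) (N : ℕ) (x : ℝ) : ℝ :=
  sSup ((fun h => x * h - Lam β N h) '' Set.Ioi (-1 : ℝ))

/-- `θ(x) = (1+2x) log(1+2x) - (1+x) log(1+x) - x log(4x)`. -/
def thetaFn (x : ℝ) : ℝ :=
  (1 + 2 * x) * Real.log (1 + 2 * x) - (1 + x) * Real.log (1 + x) - x * Real.log (4 * x)

/-- Inverse of `θ` on `[0, ∞)`. -/
def thetaInv : ℝ → ℝ := Function.invFunOn thetaFn (Set.Ici 0)

/-- The modified function `θ_{N,β}`. -/
def thetaN (β : ℝ) (N : ℕ) (x : ℝ) : ℝ :=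
  thetaFn x + ((β / 2 - 1) / (2 * (β / 2) * N)) *
    (Real.log 2 + Real.log (1 + x) - Real.log (1 + 2 * x))

/-- Inverse of `θ_{N,β}` on `[0, ∞)`. -/
def thetaNInv (β : ℝ) (N : ℕ) : ℝ → ℝ := Function.invFunOn (thetaN β N) (Set.Ici 0)

/-- `φ(s) = (1/s)(1/2 - 1/s + 1/(e^s - 1))`. -/
def phiFn (s : ℝ) : ℝ := (1 / s) * (1 / 2 - 1 / s + 1 / (Real.exp s - 1))

/-- `φ_β(s) = φ(s) - β'² φ(sβ')`. -/
def phiB (β s : ℝ) : ℝ := phiFn s - (β / 2) ^ 2 * phiFn (s * (β / 2))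

/-- `η_β(s)`; equal to `0` when `β = 2`. -/
def etaB (β s : ℝ) : ℝ :=
  if β = 2 then 0
  else s * (β / 2) * phiB β s / ((Real.exp (s * (β / 2)) - 1) * ((1 - (β / 2) ^ 2) / 12))

/-- `ζ'(-1)`, the derivative of the Riemann zeta function at `-1` (a real number). -/
def zetaD : ℝ := (deriv riemannZeta (-1)).re

/-- The constant `A_β`. -/
def Abeta (β : ℝ) : ℝ :=
  (∫ s in Set.Ioi (0 : ℝ), (1 - Real.exp (-(s / 2))) ^ 2 * etaB β s / s)
  + ∫ t in Set.Ioi (1 : ℝ), ∫ s in Set.Ioi (0 : ℝ),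
      ((2 * Real.exp (-(s * t / 2)) - Real.exp (-(s * t))) / t) * deriv (etaB β) s

/-- The constant `C_β`. -/
def Cbeta (β : ℝ) : ℝ :=
  ((2 : ℝ) ^ (1 / (12 * (β / 2))) * Real.pi ^ ((β / 2 - 3) / 4) / β) *
    Real.exp ((1 - (β / 2) ^ 2) / (12 * (β / 2)) * (Abeta β + Real.log (β / 2))
      + (β / 2) * zetaD)

/-- The Barnes `G`-function (real argument), via its Weierstrass product. -/
def barnesG (x : ℝ) : ℝ :=
  Real.exp (((x - 1) * (Real.log (2 * Real.pi) - 1)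
      - (x - 1) ^ 2 * (Real.eulerMascheroniConstant + 1)) / 2) *
    ∏' k : ℕ, ((1 + (x - 1) / (k + 1)) ^ (k + 1)
      * Real.exp (-(x - 1) + (x - 1) ^ 2 / (2 * (k + 1))))

/-- `Ψ(z) = G(1 + z/2)² / G(1 + z)`. -/
def PsiFn (z : ℝ) : ℝ := barnesG (1 + z / 2) ^ 2 / barnesG (1 + z)

/-- `m(z) = log Γ(1+z) - 2 log Γ(1+z/2)`. -/
def mFn (z : ℝ) : ℝ := Real.log (Real.Gamma (1 + z)) - 2 * Real.log (Real.Gamma (1 + z / 2))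

/-- The function `f(N, β, ϑ)` from Theorem 1.11 (iii). -/
def fLD (β : ℝ) (N : ℕ) (v : ℝ) : ℝ :=
  (β / 2) * ((N : ℝ) * v) ^ 2 * Real.log (1 + 1 / (4 * v * (1 + v)))
    + (((N : ℝ) ^ 2 * (β / 2) - (N : ℝ) * ((β / 2) - 1)) / 2) * Real.log (1 + v ^ 2 / (1 + 2 * v))

/-- The rate function `I(x)`. -/
def Ifun (x : ℝ) : ℝ :=
  -((1 - 4 * x ^ 2) / 2) * Real.log (1 + 2 * x) - x ^ 2 * Real.log (4 * x)
    + (1 - x ^ 2) * Real.log (1 + x)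

end CbetaE

namespace CmpProof

open Real MeasureTheory Set Filter Topology

/-- second difference of `log`. -/
def Lfun (z y : ℝ) : ℝ := Real.log y + Real.log (y + z) - 2 * Real.log (y + z / 2)

/-- second difference of the elementary Stirling part. -/
def dE (z x : ℝ) : ℝ :=
  (x - 1 / 2) * Real.log x + (x + z - 1 / 2) * Real.log (x + z)
    - 2 * (x + z / 2 - 1 / 2) * Real.log (x + z / 2)

/-- second difference of `log ∘ Γ`. -/
def dl (z x : ℝ) : ℝ :=
  Real.log (Real.Gamma x) + Real.log (Real.Gamma (x + z))
    - 2 * Real.log (Real.Gamma (x + z / 2))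

lemma Lfun_nonpos {z y : ℝ} (hy : 0 < y) (hz : 0 < z) : Lfun z y ≤ 0 := by
  have h1 : (0:ℝ) < y + z / 2 := by linarith
  have h2 : y * (y + z) ≤ (y + z / 2) ^ 2 := by nlinarith
  have hlog := Real.log_le_log (by positivity) h2
  rw [Real.log_mul hy.ne' (by linarith), Real.log_pow] at hlog
  unfold Lfun
  push_cast at hlog
  linarith

lemma log_GammaSeq {s : ℝ} (hs : 0 < s) {n : ℕ} (hn : 1 ≤ n) :
    Real.log (Real.GammaSeq s n)
      = s * Real.log n + Real.log ((n.factorial : ℝ)) - ∑ j ∈ Finset.range (n + 1), Real.log (s + j) := by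
  have hn' : (0:ℝ) < n := by exact_mod_cast hn
  have hne : ∀ j ∈ Finset.range (n + 1), s + (j:ℝ) ≠ 0 := fun j _ => by positivity
  have hfac : ((n.factorial : ℝ)) ≠ 0 := by exact_mod_cast (Nat.factorial_pos n).ne'
  have hpow : ((n:ℝ) ^ s) ≠ 0 := (Real.rpow_pos_of_pos hn' s).ne'
  rw [Real.GammaSeq, Real.log_div (mul_ne_zero hpow hfac) (Finset.prod_ne_zero_iff.2 hne),
    Real.log_mul hpow hfac, Real.log_rpow hn', Real.log_prod hne]

lemma tendsto_sum_negL {x z : ℝ} (hx : 0 < x) (hz : 0 < z) :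
    Tendsto (fun n : ℕ => ∑ m ∈ Finset.range (n + 1), -Lfun z (x + m)) atTop
      (𝓝 (dl z x)) := by
  have hxz : 0 < x + z := by linarith
  have hxz2 : 0 < x + z / 2 := by linarith
  have t1 : Tendsto (fun n => Real.log (Real.GammaSeq x n)) atTop
      (𝓝 (Real.log (Real.Gamma x))) :=
    ((Real.continuousAt_log (Real.Gamma_pos_of_pos hx).ne').tendsto).comp
      (Real.GammaSeq_tendsto_Gamma x)
  have t2 : Tendsto (fun n => Real.log (Real.GammaSeq (x + z) n)) atTop
      (𝓝 (Real.log (Real.Gamma (x + z)))) :=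
    ((Real.continuousAt_log (Real.Gamma_pos_of_pos hxz).ne').tendsto).comp
      (Real.GammaSeq_tendsto_Gamma (x + z))
  have t3 : Tendsto (fun n => Real.log (Real.GammaSeq (x + z / 2) n)) atTop
      (𝓝 (Real.log (Real.Gamma (x + z / 2)))) :=
    ((Real.continuousAt_log (Real.Gamma_pos_of_pos hxz2).ne').tendsto).comp
      (Real.GammaSeq_tendsto_Gamma (x + z / 2))
  have T : Tendsto (fun n => Real.log (Real.GammaSeq x n) + Real.log (Real.GammaSeq (x + z) n)
      - 2 * Real.log (Real.GammaSeq (x + z / 2) n)) atTop (𝓝 (dl z x)) := by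
    have := (t1.add t2).sub (t3.const_mul 2)
    simpa [dl, mul_comm] using this
  refine T.congr' ?_
  filter_upwards [eventually_ge_atTop 1] with n hn
  have e0 : ∑ m ∈ Finset.range (n + 1), -Lfun z (x + m)
      = 2 * (∑ j ∈ Finset.range (n + 1), Real.log (x + j + z / 2))
        - (∑ j ∈ Finset.range (n + 1), Real.log (x + j))
        - ∑ j ∈ Finset.range (n + 1), Real.log (x + j + z) := by
    have e : ∀ m ∈ Finset.range (n + 1), -Lfun z (x + m)
        = 2 * Real.log (x + m + z / 2) - Real.log (x + m) - Real.log (x + m + z) := by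
      intro m _; unfold Lfun; ring
    rw [Finset.sum_congr rfl e, Finset.sum_sub_distrib, Finset.sum_sub_distrib,
      ← Finset.mul_sum]
  have e1 : ∑ j ∈ Finset.range (n + 1), Real.log (x + z + j)
      = ∑ j ∈ Finset.range (n + 1), Real.log (x + j + z) :=
    Finset.sum_congr rfl fun j _ => by rw [add_right_comm]
  have e2 : ∑ j ∈ Finset.range (n + 1), Real.log (x + z / 2 + j)
      = ∑ j ∈ Finset.range (n + 1), Real.log (x + j + z / 2) :=
    Finset.sum_congr rfl fun j _ => by rw [add_right_comm]
  rw [log_GammaSeq hx hn, log_GammaSeq hxz hn, log_GammaSeq hxz2 hn, e0, ← e1, ← e2]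
  ring

lemma hasSum_negL {x z : ℝ} (hx : 0 < x) (hz : 0 < z) :
    HasSum (fun n : ℕ => -Lfun z (x + n)) (dl z x) := by
  rw [hasSum_iff_tendsto_nat_of_nonneg
    (fun n => neg_nonneg.2 (Lfun_nonpos (by positivity) hz))]
  exact (tendsto_add_atTop_iff_nat 1).mp (tendsto_sum_negL hx hz)

lemma hasSum_negL' {x z : ℝ} (hx : 0 < x) (hz : 0 < z) :
    HasSum (fun n : ℕ => -Lfun z (x + n + 1)) (dl z x + Lfun z x) := by
  have h1 := (hasSum_nat_add_iff' (f := fun n : ℕ => -Lfun z (x + n)) 1).mpr (hasSum_negL hx hz)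
  have hfe : (fun n : ℕ => -Lfun z (x + ↑(n + 1))) = fun n : ℕ => -Lfun z (x + n + 1) := by
    funext n; push_cast; rw [← add_assoc]
  rw [hfe] at h1
  simpa [Finset.sum_range_one, sub_neg_eq_add] using h1

lemma dl_nonneg {x z : ℝ} (hx : 0 < x) (hz : 0 < z) : 0 ≤ dl z x + Lfun z x := by
  have h := hasSum_negL' hx hz
  rw [← h.tsum_eq]
  exact tsum_nonneg fun n => neg_nonneg.2 (Lfun_nonpos (by positivity) hz)

/-! ### Frullani-type integrals -/

lemma integral_Ioc_exp_neg_mul {s : ℝ} (hs : 0 < s) {p q : ℝ} (hpq : p ≤ q) :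
    ∫ t in Ioc p q, Real.exp (-(s * t)) = (Real.exp (-(s * p)) - Real.exp (-(s * q))) / s := by
  rw [← intervalIntegral.integral_of_le hpq]
  have h1 : (∫ t in p..q, Real.exp (-(s * t)))
      = ∫ t in p..q, (fun u => Real.exp (-u)) (s * t) := rfl
  rw [h1, intervalIntegral.integral_comp_mul_left (fun u => Real.exp (-u)) hs.ne']
  have h2 : (∫ u in s * p..s * q, Real.exp (-u))
      = ∫ u in s * p..s * q, (fun v => Real.exp v) (-u) := rfl
  rw [h2, intervalIntegral.integral_comp_neg (fun v => Real.exp v), integral_exp, smul_eq_mul,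
    inv_mul_eq_div]

lemma frullani {p q : ℝ} (hp : 0 < p) (hpq : p ≤ q) :
    IntegrableOn (fun s => (Real.exp (-(s * p)) - Real.exp (-(s * q))) / s) (Ioi (0:ℝ)) ∧
    ∫ s in Ioi (0:ℝ), (Real.exp (-(s * p)) - Real.exp (-(s * q))) / s
      = Real.log q - Real.log p := by
  have hq : 0 < q := lt_of_lt_of_le hp hpq
  set μ := volume.restrict (Ioi (0:ℝ)) with hμ
  set ν := volume.restrict (Ioc p q) with hν
  have hmeas : AEStronglyMeasurable (fun u : ℝ × ℝ => Real.exp (-(u.1 * u.2))) (μ.prod ν) :=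
    (Real.continuous_exp.comp (continuous_fst.mul continuous_snd).neg).aestronglyMeasurable
  have hprodset : ∀ᵐ u ∂(μ.prod ν), u ∈ Ioi (0:ℝ) ×ˢ Ioc p q := by
    rw [hμ, hν, Measure.prod_restrict]
    exact ae_restrict_mem (measurableSet_Ioi.prod measurableSet_Ioc)
  have hInt : Integrable (fun u : ℝ × ℝ => Real.exp (-(u.1 * u.2))) (μ.prod ν) := by
    have hdom : Integrable (fun u : ℝ × ℝ => Real.exp (-p * u.1) * (1:ℝ)) (μ.prod ν) :=
      (exp_neg_integrableOn_Ioi 0 hp).mul_prod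
        ((integrableOn_const_iff (C := (1:ℝ))).2 (Or.inr measure_Ioc_lt_top))
    refine hdom.mono' hmeas ?_
    filter_upwards [hprodset] with u hu
    obtain ⟨h1, h2⟩ := hu
    rw [Real.norm_eq_abs, abs_of_pos (Real.exp_pos _), mul_one]
    apply Real.exp_le_exp.2
    have : p * u.1 ≤ u.1 * u.2 := by
      have := h2.1.le
      nlinarith [mem_Ioi.mp h1]
    linarith
  have hEq : EqOn (fun s => ∫ t, Real.exp (-(s * t)) ∂ν)
      (fun s => (Real.exp (-(s * p)) - Real.exp (-(s * q))) / s) (Ioi 0) := by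
    intro s hs
    exact integral_Ioc_exp_neg_mul (mem_Ioi.mp hs) hpq
  constructor
  · exact IntegrableOn.congr_fun (s := Ioi 0) (μ := volume) hInt.integral_prod_left hEq measurableSet_Ioi
  · calc ∫ s in Ioi (0:ℝ), (Real.exp (-(s * p)) - Real.exp (-(s * q))) / s
        = ∫ s in Ioi (0:ℝ), ∫ t, Real.exp (-(s * t)) ∂ν :=
          (setIntegral_congr_fun measurableSet_Ioi hEq).symm
      _ = ∫ t, ∫ s, Real.exp (-(s * t)) ∂μ ∂ν :=
          integral_integral_swap (f := fun s t => Real.exp (-(s * t))) hInt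
      _ = ∫ t in Ioc p q, 1 / t := by
          refine setIntegral_congr_fun measurableSet_Ioc fun t ht => ?_
          have ht0 : 0 < t := lt_trans hp ht.1
          have h1 : (∫ s in Ioi (0:ℝ), Real.exp (-(s * t)))
              = ∫ s in Ioi (0:ℝ), (fun u => Real.exp (-u)) (s * t) := rfl
          show (∫ s in Ioi (0:ℝ), Real.exp (-(s * t))) = 1 / t
          rw [h1, integral_comp_mul_right_Ioi (fun u => Real.exp (-u)) 0 ht0, zero_mul,
            integral_exp_neg_Ioi, neg_zero, Real.exp_zero, smul_eq_mul, mul_one, one_div]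
      _ = Real.log q - Real.log p := by
          rw [← intervalIntegral.integral_of_le hpq, integral_one_div
            (notMem_uIcc_of_lt hp hq), Real.log_div hq.ne' hp.ne']

lemma exp_split {s c d : ℝ} : Real.exp (-(s * (c + d))) = Real.exp (-(s * c)) * Real.exp (-(s * d)) := by
  rw [← Real.exp_add]; congr 1; ring

lemma Dpt {p a : ℝ} (s : ℝ) :
    Real.exp (-(s * p)) * (1 - Real.exp (-(s * a))) ^ 2 / s
      = (Real.exp (-(s * p)) - Real.exp (-(s * (p + a)))) / s
        - (Real.exp (-(s * (p + a))) - Real.exp (-(s * (p + 2 * a)))) / s := by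
  rw [div_sub_div_same]
  congr 1
  rw [exp_split (c := p) (d := a), show p + 2 * a = (p + a) + a by ring,
    exp_split (c := p + a) (d := a), exp_split (c := p) (d := a)]
  ring

lemma DdivS {p a : ℝ} (hp : 0 < p) (ha : 0 < a) :
    IntegrableOn (fun s => Real.exp (-(s * p)) * (1 - Real.exp (-(s * a))) ^ 2 / s)
      (Ioi (0:ℝ)) ∧
    ∫ s in Ioi (0:ℝ), Real.exp (-(s * p)) * (1 - Real.exp (-(s * a))) ^ 2 / s
      = 2 * Real.log (p + a) - Real.log p - Real.log (p + 2 * a) := by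
  obtain ⟨i1, v1⟩ := frullani hp (by linarith : p ≤ p + a)
  obtain ⟨i2, v2⟩ := frullani (by linarith : (0:ℝ) < p + a) (by linarith : p + a ≤ p + 2 * a)
  constructor
  · exact IntegrableOn.congr_fun (i1.sub i2) (fun s _ => (Dpt s).symm) measurableSet_Ioi
  · rw [setIntegral_congr_fun measurableSet_Ioi (fun s _ => Dpt (p := p) (a := a) s),
      integral_sub i1 i2, v1, v2]
    ring

lemma DdivS2 {p a : ℝ} (hp : 0 < p) (ha : 0 < a) :
    IntegrableOn (fun s => Real.exp (-(s * p)) * (1 - Real.exp (-(s * a))) ^ 2 / s ^ 2)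
      (Ioi (0:ℝ)) ∧
    ∫ s in Ioi (0:ℝ), Real.exp (-(s * p)) * (1 - Real.exp (-(s * a))) ^ 2 / s ^ 2
      = p * Real.log p - 2 * ((p + a) * Real.log (p + a))
        + (p + 2 * a) * Real.log (p + 2 * a) := by
  set μ := volume.restrict (Ioi (0:ℝ)) with hμ
  set ν := volume.restrict (Ioc p (p + a)) with hν
  set G : ℝ × ℝ → ℝ := fun u => Real.exp (-(u.1 * u.2)) * (1 - Real.exp (-(u.1 * a))) / u.1
    with hG
  have hGmeas : Measurable G := by
    apply Measurable.div
    · exact ((measurable_fst.mul measurable_snd).neg.exp).mul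
        (((measurable_fst.mul_const a).neg.exp).const_sub 1)
    · exact measurable_fst
  have hprodset : ∀ᵐ u ∂(μ.prod ν), u ∈ Ioi (0:ℝ) ×ˢ Ioc p (p + a) := by
    rw [hμ, hν, Measure.prod_restrict]
    exact ae_restrict_mem (measurableSet_Ioi.prod measurableSet_Ioc)
  have hGint : Integrable G (μ.prod ν) := by
    have hdom : Integrable (fun u : ℝ × ℝ => a * Real.exp (-p * u.1) * (1:ℝ)) (μ.prod ν) :=
      (((exp_neg_integrableOn_Ioi 0 hp)).const_mul a).mul_prod
        ((integrableOn_const_iff (C := (1:ℝ))).2 (Or.inr measure_Ioc_lt_top))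
    refine hdom.mono' hGmeas.aestronglyMeasurable ?_
    filter_upwards [hprodset] with u hu
    obtain ⟨h1, h2⟩ := hu
    have hs : (0:ℝ) < u.1 := mem_Ioi.mp h1
    have hexp1 : Real.exp (-(u.1 * a)) ≤ 1 := by
      rw [← Real.exp_zero]
      exact Real.exp_le_exp.2 (by nlinarith)
    have hexp2 : 1 - Real.exp (-(u.1 * a)) ≤ u.1 * a := by
      have := Real.add_one_le_exp (-(u.1 * a))
      nlinarith [Real.exp_pos (-(u.1 * a))]
    have hnn : 0 ≤ G u := by
      apply div_nonneg _ hs.le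
      apply mul_nonneg (Real.exp_pos _).le (by linarith)
    rw [Real.norm_eq_abs, abs_of_nonneg hnn, mul_one, hG]
    have hle1 : Real.exp (-(u.1 * u.2)) ≤ Real.exp (-p * u.1) := by
      apply Real.exp_le_exp.2
      have := h2.1.le
      nlinarith
    calc Real.exp (-(u.1 * u.2)) * (1 - Real.exp (-(u.1 * a))) / u.1
        ≤ Real.exp (-p * u.1) * (u.1 * a) / u.1 := by
          exact (div_le_div_iff_of_pos_right hs).2
            (mul_le_mul hle1 hexp2 (by linarith) (Real.exp_pos _).le)
      _ = a * Real.exp (-p * u.1) := by field_simp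
  have hEq : EqOn (fun s => ∫ t, G (s, t) ∂ν)
      (fun s => Real.exp (-(s * p)) * (1 - Real.exp (-(s * a))) ^ 2 / s ^ 2) (Ioi 0) := by
    intro s hs
    have hs0 : (0:ℝ) < s := mem_Ioi.mp hs
    show (∫ t in Ioc p (p + a), Real.exp (-(s * t)) * (1 - Real.exp (-(s * a))) / s) = _
    simp only [mul_div_assoc]
    rw [integral_mul_const, integral_Ioc_exp_neg_mul hs0 (by linarith : p ≤ p + a),
      exp_split (c := p) (d := a)]
    field_simp
  constructor
  · exact IntegrableOn.congr_fun (s := Ioi 0) (μ := volume) hGint.integral_prod_left hEq measurableSet_Ioi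
  · calc ∫ s in Ioi (0:ℝ), Real.exp (-(s * p)) * (1 - Real.exp (-(s * a))) ^ 2 / s ^ 2
        = ∫ s in Ioi (0:ℝ), ∫ t, G (s, t) ∂ν :=
          (setIntegral_congr_fun measurableSet_Ioi hEq).symm
      _ = ∫ t, ∫ s, G (s, t) ∂μ ∂ν :=
          integral_integral_swap (f := fun s t => G (s, t)) (by exact hGint)
      _ = ∫ t in Ioc p (p + a), (Real.log (t + a) - Real.log t) := by
          refine setIntegral_congr_fun measurableSet_Ioc fun t ht => ?_
          have ht0 : 0 < t := lt_trans hp ht.1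
          have hEq2 : EqOn (fun s => G (s, t))
              (fun s => (Real.exp (-(s * t)) - Real.exp (-(s * (t + a)))) / s) (Ioi 0) := by
            intro s _
            show Real.exp (-(s * t)) * (1 - Real.exp (-(s * a))) / s
              = (Real.exp (-(s * t)) - Real.exp (-(s * (t + a)))) / s
            rw [exp_split (c := t) (d := a)]
            ring
          show (∫ s in Ioi (0:ℝ), G (s, t)) = _
          rw [setIntegral_congr_fun measurableSet_Ioi hEq2,
            (frullani ht0 (by linarith : t ≤ t + a)).2]
      _ = p * Real.log p - 2 * ((p + a) * Real.log (p + a))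
            + (p + 2 * a) * Real.log (p + 2 * a) := by
          rw [← intervalIntegral.integral_of_le (by linarith : p ≤ p + a)]
          have hi1 : IntervalIntegrable (fun t => Real.log (t + a)) volume p (p + a) := by
            have h := (intervalIntegral.intervalIntegrable_log (μ := volume) (a := p + a)
              (b := p + 2 * a)
              (notMem_uIcc_of_lt (by linarith) (by linarith))).comp_add_right a
            have e1 : p + a - a = p := by ring
            have e2 : p + 2 * a - a = p + a := by ring
            rwa [e1, e2] at h
          have hi2 : IntervalIntegrable Real.log volume p (p + a) :=
            intervalIntegral.intervalIntegrable_log (notMem_uIcc_of_lt hp (by linarith))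
          rw [intervalIntegral.integral_sub hi1 hi2,
            intervalIntegral.integral_comp_add_right (fun u => Real.log u) a,
            integral_log,
            integral_log]
          ring

lemma exp_sub_one_pos {s : ℝ} (hs : 0 < s) : 0 < Real.exp s - 1 := by
  have := Real.add_one_le_exp s
  linarith

lemma Jterm {x z : ℝ} (hx : 0 < x) (hz : 0 < z) (n : ℕ) :
    IntegrableOn (fun s => Real.exp (-(s * (x + n + 1)))
      * (1 - Real.exp (-(s * (z / 2)))) ^ 2 / s) (Ioi (0:ℝ)) ∧
    ∫ s in Ioi (0:ℝ), Real.exp (-(s * (x + n + 1))) * (1 - Real.exp (-(s * (z / 2)))) ^ 2 / s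
      = -Lfun z (x + n + 1) := by
  have hp : (0:ℝ) < x + n + 1 := by positivity
  obtain ⟨hi, hv⟩ := DdivS hp (half_pos hz)
  refine ⟨hi, ?_⟩
  rw [hv, show x + (n:ℝ) + 1 + 2 * (z / 2) = x + ↑n + 1 + z by ring]
  unfold Lfun
  ring

lemma Jmeas {c a : ℝ} : Measurable (fun s : ℝ =>
    Real.exp (-(s * c)) * (1 - Real.exp (-(s * a))) ^ 2 / s) := by
  apply Measurable.div
  · exact ((Real.measurable_exp.comp (measurable_id.mul_const c).neg)).mul
      (((Real.measurable_exp.comp (measurable_id.mul_const a).neg).const_sub 1).pow_const 2)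
  · exact measurable_id

lemma piece3 {x z : ℝ} (hx : 0 < x) (hz : 0 < z) :
    IntegrableOn (fun s => Real.exp (-(s * x)) * (1 - Real.exp (-(s * (z / 2)))) ^ 2
      / (s * (Real.exp s - 1))) (Ioi (0:ℝ)) ∧
    ∫ s in Ioi (0:ℝ), Real.exp (-(s * x)) * (1 - Real.exp (-(s * (z / 2)))) ^ 2
      / (s * (Real.exp s - 1)) = dl z x + Lfun z x := by
  have hFmeas : Measurable (fun s : ℝ => Real.exp (-(s * x))
      * (1 - Real.exp (-(s * (z / 2)))) ^ 2 / (s * (Real.exp s - 1))) := by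
    apply Measurable.div
    · exact ((Real.measurable_exp.comp (measurable_id.mul_const x).neg)).mul
        (((Real.measurable_exp.comp (measurable_id.mul_const (z/2)).neg).const_sub 1).pow_const 2)
    · exact measurable_id.mul (Real.measurable_exp.sub measurable_const)
  have hJnn : ∀ n : ℕ, ∀ s ∈ Ioi (0:ℝ), (0:ℝ) ≤ Real.exp (-(s * (x + n + 1)))
      * (1 - Real.exp (-(s * (z / 2)))) ^ 2 / s := by
    intro n s hs
    have hs0 : (0:ℝ) < s := hs
    positivity
  have hsum : ∀ s ∈ Ioi (0:ℝ),
      HasSum (fun n : ℕ =>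
          Real.exp (-(s * (x + n + 1))) * (1 - Real.exp (-(s * (z / 2)))) ^ 2 / s)
        (Real.exp (-(s * x)) * (1 - Real.exp (-(s * (z / 2)))) ^ 2
          / (s * (Real.exp s - 1))) := by
    intro s hs
    have hs0 : (0:ℝ) < s := hs
    set A : ℝ := Real.exp (-(s * x)) * (1 - Real.exp (-(s * (z / 2)))) ^ 2 with hA
    have hr0 : (0:ℝ) ≤ Real.exp (-s) := (Real.exp_pos _).le
    have hr1 : Real.exp (-s) < 1 := by
      rw [← Real.exp_zero]; exact Real.exp_lt_exp.2 (by linarith)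
    have hgeo := (hasSum_geometric_of_lt_one hr0 hr1).mul_left (A / s * Real.exp (-s))
    have hterm_eq : (fun n : ℕ => A / s * Real.exp (-s) * Real.exp (-s) ^ n)
        = fun n : ℕ => Real.exp (-(s * (x + n + 1)))
            * (1 - Real.exp (-(s * (z / 2)))) ^ 2 / s := by
      funext n
      have he : Real.exp (-(s * (x + ↑n + 1))) = Real.exp (-(s * x)) * Real.exp (-s) ^ (n + 1) := by
        rw [← Real.exp_nat_mul, ← Real.exp_add]
        congr 1
        push_cast
        ring
      rw [he, pow_succ, hA]
      ring
    have hsum_eq : A / s * Real.exp (-s) * (1 - Real.exp (-s))⁻¹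
        = A / (s * (Real.exp s - 1)) := by
      have h1 : (0:ℝ) < Real.exp s - 1 := exp_sub_one_pos hs0
      have h2 : 1 - Real.exp (-s) = (Real.exp s - 1) * Real.exp (-s) := by
        rw [Real.exp_neg]
        field_simp
      have h3 : Real.exp s ≠ 0 := (Real.exp_pos s).ne'
      rw [h2, Real.exp_neg]
      field_simp
    rw [hterm_eq, hsum_eq] at hgeo
    exact hgeo
  have hFeq : ∀ᵐ s ∂(volume.restrict (Ioi (0:ℝ))),
      ENNReal.ofReal (Real.exp (-(s * x)) * (1 - Real.exp (-(s * (z / 2)))) ^ 2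
          / (s * (Real.exp s - 1)))
        = ∑' n : ℕ, ENNReal.ofReal (Real.exp (-(s * (x + n + 1)))
            * (1 - Real.exp (-(s * (z / 2)))) ^ 2 / s) := by
    filter_upwards [ae_restrict_mem measurableSet_Ioi] with s hs
    rw [← (hsum s hs).tsum_eq,
      ENNReal.ofReal_tsum_of_nonneg (fun n => hJnn n s hs) (hsum s hs).summable]
  have hlin : ∫⁻ s in Ioi (0:ℝ), ENNReal.ofReal (Real.exp (-(s * x))
        * (1 - Real.exp (-(s * (z / 2)))) ^ 2 / (s * (Real.exp s - 1)))
      = ENNReal.ofReal (dl z x + Lfun z x) := by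
    rw [lintegral_congr_ae hFeq]
    rw [lintegral_tsum (μ := volume.restrict (Ioi 0))
      (f := fun (n : ℕ) (s : ℝ) => ENNReal.ofReal (Real.exp (-(s * (x + n + 1)))
        * (1 - Real.exp (-(s * (z / 2)))) ^ 2 / s))
      (fun n => ((Jmeas (c := x + n + 1) (a := z / 2)).ennreal_ofReal).aemeasurable)]
    have hv : ∀ n : ℕ, (∫⁻ s in Ioi (0:ℝ), ENNReal.ofReal (Real.exp (-(s * (x + n + 1)))
          * (1 - Real.exp (-(s * (z / 2)))) ^ 2 / s))
        = ENNReal.ofReal (-Lfun z (x + n + 1)) := by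
      intro n
      have hnn : (0:ℝ → ℝ) ≤ᵐ[volume.restrict (Ioi (0:ℝ))]
          (fun s => Real.exp (-(s * (x + n + 1))) * (1 - Real.exp (-(s * (z / 2)))) ^ 2 / s) := by
        filter_upwards [ae_restrict_mem measurableSet_Ioi] with s hs
        exact hJnn n s hs
      rw [← MeasureTheory.ofReal_integral_eq_lintegral_ofReal (Jterm hx hz n).1 hnn,
        (Jterm hx hz n).2]
    simp_rw [hv]
    rw [← ENNReal.ofReal_tsum_of_nonneg
      (fun n => neg_nonneg.2 (Lfun_nonpos (by positivity) hz)) (hasSum_negL' hx hz).summable,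
      (hasSum_negL' hx hz).tsum_eq]
  have hFnn : (0:ℝ → ℝ) ≤ᵐ[volume.restrict (Ioi (0:ℝ))]
      (fun s => Real.exp (-(s * x)) * (1 - Real.exp (-(s * (z / 2)))) ^ 2
        / (s * (Real.exp s - 1))) := by
    filter_upwards [ae_restrict_mem measurableSet_Ioi] with s hs
    have hs0 : (0:ℝ) < s := hs
    have h1 := exp_sub_one_pos hs0
    positivity
  have hint : IntegrableOn (fun s => Real.exp (-(s * x))
      * (1 - Real.exp (-(s * (z / 2)))) ^ 2 / (s * (Real.exp s - 1))) (Ioi (0:ℝ)) := by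
    refine ⟨hFmeas.aestronglyMeasurable, ?_⟩
    rw [hasFiniteIntegral_iff_ofReal hFnn, hlin]
    exact ENNReal.ofReal_lt_top
  refine ⟨hint, ?_⟩
  rw [integral_eq_lintegral_of_nonneg_ae hFnn hFmeas.aestronglyMeasurable, hlin,
    ENNReal.toReal_ofReal (dl_nonneg hx hz)]

lemma main_integral {x z : ℝ} (hx : 0 < x) (hz : 0 < z) :
    IntegrableOn (fun s => Real.exp (-(s * x)) * (1 - Real.exp (-(s * (z / 2)))) ^ 2
      * CbetaE.phiFn s) (Ioi (0:ℝ)) ∧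
    ∫ s in Ioi (0:ℝ), Real.exp (-(s * x)) * (1 - Real.exp (-(s * (z / 2)))) ^ 2
      * CbetaE.phiFn s = dl z x - dE z x := by
  have hz2 : (0:ℝ) < z / 2 := half_pos hz
  obtain ⟨i1, v1⟩ := DdivS hx hz2
  obtain ⟨i2, v2⟩ := DdivS2 hx hz2
  obtain ⟨i3, v3⟩ := piece3 hx hz
  have hpt : ∀ s ∈ Ioi (0:ℝ),
      Real.exp (-(s * x)) * (1 - Real.exp (-(s * (z / 2)))) ^ 2 * CbetaE.phiFn s
        = Real.exp (-(s * x)) * (1 - Real.exp (-(s * (z / 2)))) ^ 2 / s / 2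
          - Real.exp (-(s * x)) * (1 - Real.exp (-(s * (z / 2)))) ^ 2 / s ^ 2
          + Real.exp (-(s * x)) * (1 - Real.exp (-(s * (z / 2)))) ^ 2
            / (s * (Real.exp s - 1)) := by
    intro s hs
    have hs0 : (0:ℝ) < s := hs
    have he : Real.exp s - 1 ≠ 0 := (exp_sub_one_pos hs0).ne'
    unfold CbetaE.phiFn
    field_simp
  have i1h : IntegrableOn (fun s => Real.exp (-(s * x))
      * (1 - Real.exp (-(s * (z / 2)))) ^ 2 / s / 2) (Ioi (0:ℝ)) := i1.div_const 2
  have i12 : IntegrableOn (fun s => Real.exp (-(s * x))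
      * (1 - Real.exp (-(s * (z / 2)))) ^ 2 / s / 2
      - Real.exp (-(s * x)) * (1 - Real.exp (-(s * (z / 2)))) ^ 2 / s ^ 2) (Ioi (0:ℝ)) :=
    i1h.sub i2
  have i123 : IntegrableOn (fun s => Real.exp (-(s * x))
      * (1 - Real.exp (-(s * (z / 2)))) ^ 2 / s / 2
      - Real.exp (-(s * x)) * (1 - Real.exp (-(s * (z / 2)))) ^ 2 / s ^ 2
      + Real.exp (-(s * x)) * (1 - Real.exp (-(s * (z / 2)))) ^ 2
        / (s * (Real.exp s - 1))) (Ioi (0:ℝ)) := i12.add i3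
  constructor
  · exact IntegrableOn.congr_fun i123 (fun s hs => (hpt s hs).symm) measurableSet_Ioi
  · rw [setIntegral_congr_fun measurableSet_Ioi hpt,
      integral_add i12 i3, integral_sub i1h i2,
      integral_div, v1, v2, v3, show x + 2 * (z / 2) = x + z by ring]
    unfold dE Lfun dl
    ring

lemma cor2 {b j w : ℝ} (hb : 0 < b) (hj : 0 < j) (hw : 0 < w) :
    IntegrableOn (fun s => Real.exp (-(s * (b * j)))
      * (1 - Real.exp (-(s * (b * w / 2)))) ^ 2 * (b ^ 2 * CbetaE.phiFn (s * b)))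
      (Ioi (0:ℝ)) ∧
    ∫ s in Ioi (0:ℝ), Real.exp (-(s * (b * j)))
      * (1 - Real.exp (-(s * (b * w / 2)))) ^ 2 * (b ^ 2 * CbetaE.phiFn (s * b))
      = b * (dl w j - dE w j) := by
  obtain ⟨hi, hv⟩ := main_integral hj hw
  set g : ℝ → ℝ := fun u => b ^ 2 * (Real.exp (-(u * j)) * (1 - Real.exp (-(u * (w / 2)))) ^ 2
    * CbetaE.phiFn u) with hg
  have hcomp : ∀ s : ℝ, Real.exp (-(s * (b * j))) * (1 - Real.exp (-(s * (b * w / 2)))) ^ 2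
      * (b ^ 2 * CbetaE.phiFn (s * b)) = g (s * b) := by
    intro s
    rw [hg]
    show _ = b ^ 2 * (Real.exp (-(s * b * j)) * (1 - Real.exp (-(s * b * (w / 2)))) ^ 2
      * CbetaE.phiFn (s * b))
    rw [show s * b * j = s * (b * j) by ring, show s * b * (w / 2) = s * (b * w / 2) by ring]
    ring
  have hgi : IntegrableOn g (Ioi (0:ℝ)) := hi.const_mul _
  constructor
  · have h0 : IntegrableOn g (Ioi (0 * b)) := by rwa [zero_mul]
    have h1 := (integrableOn_Ioi_comp_mul_right_iff g 0 hb).2 h0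
    exact IntegrableOn.congr_fun h1 (fun s _ => (hcomp s).symm) measurableSet_Ioi
  · rw [setIntegral_congr_fun measurableSet_Ioi (fun s _ => hcomp s),
      integral_comp_mul_right_Ioi g 0 hb, zero_mul, smul_eq_mul]
    have : ∫ u in Ioi (0:ℝ), g u = b ^ 2 * (dl w j - dE w j) := by
      rw [hg, MeasureTheory.integral_const_mul, hv]
    rw [this]
    field_simp

lemma term_succ {y z : ℝ} (hy : 0 < y) (hz : 0 < z) :
    Real.log (Real.Gamma (y + 1)) + Real.log (Real.Gamma (y + 1 + z))
      - 2 * Real.log (Real.Gamma (y + 1 + z / 2)) = dl z y + Lfun z y := by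
  have hyz : (0:ℝ) < y + z := by linarith
  have hyz2 : (0:ℝ) < y + z / 2 := by linarith
  rw [show y + 1 + z = (y + z) + 1 by ring, show y + 1 + z / 2 = (y + z / 2) + 1 by ring,
    Real.Gamma_add_one hy.ne', Real.Gamma_add_one hyz.ne', Real.Gamma_add_one hyz2.ne',
    Real.log_mul hy.ne' (Real.Gamma_pos_of_pos hy).ne',
    Real.log_mul hyz.ne' (Real.Gamma_pos_of_pos hyz).ne',
    Real.log_mul hyz2.ne' (Real.Gamma_pos_of_pos hyz2).ne']
  unfold dl Lfun
  ring

lemma Lam_eq {β : ℝ} (hβ : 0 < β) {N : ℕ} (hN : 1 ≤ N) (z : ℝ) (hz : 0 < z) :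
    CbetaE.Lam β N z = CbetaE.mFn z
      + ∑ k ∈ Finset.range (N - 1),
          (dl z (β / 2 * ((k:ℝ) + 1)) + Lfun z (β / 2 * ((k:ℝ) + 1))) := by
  obtain ⟨M, rfl⟩ : ∃ M, N = M + 1 := ⟨N - 1, (Nat.succ_pred_eq_of_pos hN).symm⟩
  unfold CbetaE.Lam
  rw [Finset.sum_range_succ']
  simp only [Nat.add_sub_cancel]
  have h0 : Real.log (Real.Gamma (β / 2 * ((0:ℕ):ℝ) + 1))
      + Real.log (Real.Gamma (β / 2 * ((0:ℕ):ℝ) + 1 + z))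
      - 2 * Real.log (Real.Gamma (β / 2 * ((0:ℕ):ℝ) + 1 + z / 2)) = CbetaE.mFn z := by
    norm_num [CbetaE.mFn, Real.Gamma_one]
  have e : ∀ k ∈ Finset.range M,
      (Real.log (Real.Gamma (β / 2 * ((k + 1 : ℕ):ℝ) + 1))
        + Real.log (Real.Gamma (β / 2 * ((k + 1 : ℕ):ℝ) + 1 + z))
        - 2 * Real.log (Real.Gamma (β / 2 * ((k + 1 : ℕ):ℝ) + 1 + z / 2)))
      = dl z (β / 2 * ((k:ℝ) + 1)) + Lfun z (β / 2 * ((k:ℝ) + 1)) := by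
    intro k _
    have hc : ((k + 1 : ℕ) : ℝ) = (k : ℝ) + 1 := by push_cast; ring
    rw [hc]
    exact term_succ (by positivity) hz
  rw [Finset.sum_congr rfl e, h0]
  ring

lemma Lam2_eq {N : ℕ} (hN : 1 ≤ N) {w : ℝ} (hw : 0 < w) :
    CbetaE.Lam 2 N w = CbetaE.mFn w
      + ∑ k ∈ Finset.range (N - 1), (dl w ((k:ℝ) + 1) + Lfun w ((k:ℝ) + 1)) := by
  rw [Lam_eq (by norm_num) hN w hw]
  norm_num

lemma telescope {c : ℝ} (hc : 0 ≤ c) (n : ℕ) :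
    ∑ k ∈ Finset.range n, Real.log ((k:ℝ) + 1 + c)
      = Real.log (Real.Gamma ((n:ℝ) + 1 + c)) - Real.log (Real.Gamma (1 + c)) := by
  induction n with
  | zero => simp
  | succ m ih =>
    rw [Finset.sum_range_succ, ih]
    have h1 : (0:ℝ) < (m:ℝ) + 1 + c := by positivity
    rw [show ((m + 1 : ℕ):ℝ) + 1 + c = ((m:ℝ) + 1 + c) + 1 by push_cast; ring,
      Real.Gamma_add_one h1.ne', Real.log_mul h1.ne' (Real.Gamma_pos_of_pos h1).ne']
    ring

lemma sum_Lfun {w : ℝ} (hw : 0 < w) (M : ℕ) :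
    ∑ k ∈ Finset.range M, Lfun w ((k:ℝ) + 1)
      = Real.log (Real.Gamma ((M:ℝ) + 1)) + Real.log (Real.Gamma ((M:ℝ) + 1 + w))
        - 2 * Real.log (Real.Gamma ((M:ℝ) + 1 + w / 2)) - CbetaE.mFn w := by
  have e : ∀ k ∈ Finset.range M, Lfun w ((k:ℝ) + 1)
      = Real.log ((k:ℝ) + 1 + 0) + Real.log ((k:ℝ) + 1 + w)
        - 2 * Real.log ((k:ℝ) + 1 + w / 2) := by
    intro k _
    unfold Lfun
    rw [add_zero]
  rw [Finset.sum_congr rfl e, Finset.sum_sub_distrib, Finset.sum_add_distrib,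
    ← Finset.mul_sum, telescope le_rfl M, telescope hw.le M, telescope (half_pos hw).le M]
  simp only [add_zero]
  rw [Real.Gamma_one, Real.log_one]
  unfold CbetaE.mFn
  ring

lemma perk {b j w : ℝ} (hb : 0 < b) (hj : 0 < j) (hw : 0 < w) :
    dE (b * w) (b * j) - b * dE w j + Lfun (b * w) (b * j) - b * Lfun w j
      = -((b - 1) / 2) * Lfun w j := by
  have hjw : (0:ℝ) < j + w := by linarith
  have hjw2 : (0:ℝ) < j + w / 2 := by linarith
  unfold dE Lfun
  rw [show b * j + b * w = b * (j + w) by ring, show b * j + b * w / 2 = b * (j + w / 2) by ring,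
    Real.log_mul hb.ne' hj.ne', Real.log_mul hb.ne' hjw.ne', Real.log_mul hb.ne' hjw2.ne']
  ring

end CmpProof

open CbetaE in
/-- Comparison between Haar ensembles and circular `β` ensembles (Theorem 2.1). -/
theorem comparison_haar_cbe (β : ℝ) (hβ : 0 < β) (N : ℕ) (hN : 1 ≤ N)
    (z : ℝ) (hz : 0 < z) :
    Lam β N z = (β / 2) * Lam 2 N (z / (β / 2))
      + ((β / 2 - 1) / 2) *
          (2 * Real.log (Real.Gamma ((N : ℝ) + z / (2 * (β / 2))))
            - Real.log (Real.Gamma (N : ℝ))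
            - Real.log (Real.Gamma ((N : ℝ) + z / (β / 2))))
      + mFn z - ((β / 2 + 1) / 2) * mFn (z / (β / 2))
      + ∫ s in Set.Ioi (0 : ℝ),
          ((1 - Real.exp (-(s * (β / 2) * ((N : ℝ) - 1))))
              / (1 - Real.exp (-(s * (β / 2)))))
            * (1 - Real.exp (-(s * z / 2))) ^ 2 * Real.exp (-(s * (β / 2))) * phiB β s := by
  have hb : 0 < β / 2 := by linarith
  set b := β / 2 with hbdef
  set w := z / b with hwdef
  have hw : 0 < w := div_pos hz hb
  have hbne : b ≠ 0 := ne_of_gt hb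
  have hbw : b * w = z := by rw [hwdef]; field_simp
  have hMN : ((N - 1 : ℕ) : ℝ) + 1 = (N : ℝ) := by
    rw [Nat.cast_sub hN, Nat.cast_one]; ring
  have hpos : ∀ k : ℕ, (0:ℝ) < b * ((k:ℝ) + 1) := fun k => by positivity
  have hjpos : ∀ k : ℕ, (0:ℝ) < (k:ℝ) + 1 := fun k => by positivity
  have hIeq : (∫ s in Set.Ioi (0:ℝ),
        ((1 - Real.exp (-(s * b * ((N : ℝ) - 1)))) / (1 - Real.exp (-(s * b))))
          * (1 - Real.exp (-(s * z / 2))) ^ 2 * Real.exp (-(s * b)) * CbetaE.phiB β s)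
      = ∑ k ∈ Finset.range (N - 1),
          ((CmpProof.dl z (b * ((k:ℝ) + 1)) - CmpProof.dE z (b * ((k:ℝ) + 1)))
            - b * (CmpProof.dl w ((k:ℝ) + 1) - CmpProof.dE w ((k:ℝ) + 1))) := by
    have hcong : Set.EqOn
        (fun s => ((1 - Real.exp (-(s * b * ((N : ℝ) - 1)))) / (1 - Real.exp (-(s * b))))
          * (1 - Real.exp (-(s * z / 2))) ^ 2 * Real.exp (-(s * b)) * CbetaE.phiB β s)
        (fun s => ∑ k ∈ Finset.range (N - 1),
          (Real.exp (-(s * (b * ((k:ℝ) + 1)))) * (1 - Real.exp (-(s * (z / 2)))) ^ 2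
              * CbetaE.phiFn s
            - Real.exp (-(s * (b * ((k:ℝ) + 1)))) * (1 - Real.exp (-(s * (b * w / 2)))) ^ 2
              * (b ^ 2 * CbetaE.phiFn (s * b)))) (Set.Ioi 0) := by
      intro s hs
      have hs0 : (0:ℝ) < s := hs
      have hr1 : Real.exp (-(s * b)) < 1 := by
        rw [← Real.exp_zero]
        exact Real.exp_lt_exp.2 (by nlinarith)
      have hrm : Real.exp (-(s * b)) ^ (N - 1) = Real.exp (-(s * b * ((N : ℝ) - 1))) := by
        rw [← Real.exp_nat_mul]
        congr 1
        rw [Nat.cast_sub hN, Nat.cast_one]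
        ring
      have hrk : ∀ k : ℕ, Real.exp (-(s * b)) ^ (k + 1)
          = Real.exp (-(s * (b * ((k:ℝ) + 1)))) := by
        intro k
        rw [← Real.exp_nat_mul]
        congr 1
        push_cast
        ring
      have hgeom : ∑ k ∈ Finset.range (N - 1), Real.exp (-(s * b)) ^ (k + 1)
          = (1 - Real.exp (-(s * b * ((N : ℝ) - 1)))) / (1 - Real.exp (-(s * b)))
            * Real.exp (-(s * b)) := by
        rw [← hrm]
        have h2 : ∑ k ∈ Finset.range (N - 1), Real.exp (-(s * b)) ^ (k + 1)
            = (∑ k ∈ Finset.range (N - 1), Real.exp (-(s * b)) ^ k) * Real.exp (-(s * b)) := by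
          rw [Finset.sum_mul]
          exact Finset.sum_congr rfl fun k _ => pow_succ _ k
        rw [h2, geom_sum_eq hr1.ne,
          show Real.exp (-(s * b)) ^ (N - 1) - 1
            = -(1 - Real.exp (-(s * b)) ^ (N - 1)) by ring,
          show Real.exp (-(s * b)) - 1 = -(1 - Real.exp (-(s * b))) by ring, neg_div_neg_eq]
      have hterm_eq : ∀ k ∈ Finset.range (N - 1),
          (Real.exp (-(s * (b * ((k:ℝ) + 1)))) * (1 - Real.exp (-(s * (z / 2)))) ^ 2
              * CbetaE.phiFn s
            - Real.exp (-(s * (b * ((k:ℝ) + 1)))) * (1 - Real.exp (-(s * (b * w / 2)))) ^ 2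
              * (b ^ 2 * CbetaE.phiFn (s * b)))
          = Real.exp (-(s * b)) ^ (k + 1) * ((1 - Real.exp (-(s * z / 2))) ^ 2
              * (CbetaE.phiFn s - b ^ 2 * CbetaE.phiFn (s * b))) := by
        intro k _
        rw [hrk k, show -(s * (z / 2)) = -(s * z / 2) by ring,
          show -(s * (b * w / 2)) = -(s * z / 2) by rw [hbw]; ring]
        ring
      show ((1 - Real.exp (-(s * b * ((N : ℝ) - 1)))) / (1 - Real.exp (-(s * b))))
          * (1 - Real.exp (-(s * z / 2))) ^ 2 * Real.exp (-(s * b)) * CbetaE.phiB β s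
        = ∑ k ∈ Finset.range (N - 1),
          (Real.exp (-(s * (b * ((k:ℝ) + 1)))) * (1 - Real.exp (-(s * (z / 2)))) ^ 2
              * CbetaE.phiFn s
            - Real.exp (-(s * (b * ((k:ℝ) + 1)))) * (1 - Real.exp (-(s * (b * w / 2)))) ^ 2
              * (b ^ 2 * CbetaE.phiFn (s * b)))
      unfold CbetaE.phiB
      rw [← hbdef, Finset.sum_congr rfl hterm_eq, ← Finset.sum_mul, hgeom]
      ring
    have hsub : ∀ k : ℕ, IntegrableOn (fun s =>
        Real.exp (-(s * (b * ((k:ℝ) + 1)))) * (1 - Real.exp (-(s * (z / 2)))) ^ 2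
            * CbetaE.phiFn s
          - Real.exp (-(s * (b * ((k:ℝ) + 1)))) * (1 - Real.exp (-(s * (b * w / 2)))) ^ 2
            * (b ^ 2 * CbetaE.phiFn (s * b))) (Set.Ioi (0:ℝ)) := fun k =>
      (CmpProof.main_integral (hpos k) hz).1.sub ((CmpProof.cor2 hb (hjpos k) hw).1)
    rw [setIntegral_congr_fun measurableSet_Ioi hcong]
    rw [MeasureTheory.integral_finset_sum (μ := volume.restrict (Set.Ioi 0))
      (f := fun (k : ℕ) (s : ℝ) =>
        Real.exp (-(s * (b * ((k:ℝ) + 1)))) * (1 - Real.exp (-(s * (z / 2)))) ^ 2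
            * CbetaE.phiFn s
          - Real.exp (-(s * (b * ((k:ℝ) + 1)))) * (1 - Real.exp (-(s * (b * w / 2)))) ^ 2
            * (b ^ 2 * CbetaE.phiFn (s * b)))
      (Finset.range (N - 1)) (fun k _ => hsub k)]
    refine Finset.sum_congr rfl fun k _ => ?_
    rw [MeasureTheory.integral_sub (CmpProof.main_integral (hpos k) hz).1
        ((CmpProof.cor2 hb (hjpos k) hw).1),
      (CmpProof.main_integral (hpos k) hz).2, (CmpProof.cor2 hb (hjpos k) hw).2]
  rw [CmpProof.Lam_eq hβ hN z hz, CmpProof.Lam2_eq hN hw, hIeq, ← hbdef]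
  have e4 : z / (2 * b) = w / 2 := by rw [hwdef, div_div, mul_comm]
  rw [e4]
  have key : ∑ k ∈ Finset.range (N - 1),
        (CmpProof.dl z (b * ((k:ℝ) + 1)) + CmpProof.Lfun z (b * ((k:ℝ) + 1)))
      = b * ∑ k ∈ Finset.range (N - 1),
          (CmpProof.dl w ((k:ℝ) + 1) + CmpProof.Lfun w ((k:ℝ) + 1))
        + (∑ k ∈ Finset.range (N - 1),
            ((CmpProof.dl z (b * ((k:ℝ) + 1)) - CmpProof.dE z (b * ((k:ℝ) + 1)))
              - b * (CmpProof.dl w ((k:ℝ) + 1) - CmpProof.dE w ((k:ℝ) + 1))))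
        - ((b - 1) / 2) * ∑ k ∈ Finset.range (N - 1), CmpProof.Lfun w ((k:ℝ) + 1) := by
    rw [Finset.mul_sum, Finset.mul_sum, ← Finset.sum_add_distrib, ← Finset.sum_sub_distrib]
    refine Finset.sum_congr rfl fun k _ => ?_
    have hp := CmpProof.perk hb (hjpos k) hw
    rw [← hbw]
    linear_combination hp
  have hSL := CmpProof.sum_Lfun hw (N - 1)
  rw [hMN] at hSL
  linear_combination key - ((b - 1) / 2) * hSL
end
end

section
/- There exists an absolute constant C such that for all integers N≥1 and all real δ>0: (i) |Λ'_{N,2}(2δ) − [δ·log(N/(4δ)) + N·((1+2δ/N)·log(1+2δ/N) − (1+δ/N)·log(1+δ/N)) + (1/12)·(1/(N+δ) − 1/(2δ) − 1/(N+2δ))]| ≤ C/δ³, and (ii) |Λ''_{N,2}(2δ) − [(1/2)·log(N/(4δ)) + log(1+2δ/N) − (1/2)·log(1+δ/N) + (1/12)·(1/(N+2δ)² − 1/(2(N+δ)²) + 1/(4δ²))]| ≤ C/δ⁴. -/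
open MeasureTheory Filter

noncomputable section

namespace PsiAux

open Filter Topology Set


noncomputable def psi (x : ℝ) : ℝ :=
  -Real.eulerMascheroniConstant + ∑' n : ℕ, (1/((n:ℝ)+1) - 1/((n:ℝ)+x))

noncomputable def psiD (x : ℝ) : ℝ := ∑' n : ℕ, (1/((n:ℝ)+x)^2)

lemma aux_ge (x : ℝ) (hx : 0 < x) (n : ℕ) : min x 1 * ((n:ℝ)+1) ≤ (n:ℝ)+x := by
  rcases le_total x 1 with h | h
  · rw [min_eq_left h]
    nlinarith [n.cast_nonneg (α := ℝ)]
  · rw [min_eq_right h]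
    nlinarith [n.cast_nonneg (α := ℝ)]

lemma summable_sq_shift : Summable (fun n : ℕ => 1/((n:ℝ)+1)^2) := by
  have := (summable_nat_add_iff (f := fun n : ℕ => 1/(n:ℝ)^2) 1).mpr
    (Real.summable_one_div_nat_pow.mpr one_lt_two)
  simpa using this

lemma summable_sq (x : ℝ) (hx : 0 < x) : Summable (fun n : ℕ => 1/((n:ℝ)+x)^2) := by
  have hc : 0 < min x 1 := lt_min hx one_pos
  apply Summable.of_nonneg_of_le (fun n => by positivity)
    (fun n => ?_) (summable_sq_shift.mul_left ((1/(min x 1))^2))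
  have h1 : min x 1 * ((n:ℝ)+1) ≤ (n:ℝ)+x := aux_ge x hx n
  have h2 : (0:ℝ) < (n:ℝ)+1 := by positivity
  have h3 : (0:ℝ) < (n:ℝ)+x := by positivity
  have h4 : (min x 1 * ((n:ℝ)+1))^2 ≤ ((n:ℝ)+x)^2 := by
    apply sq_le_sq' (by nlinarith) h1
  have h5 : (0:ℝ) < (min x 1 * ((n:ℝ)+1))^2 := by positivity
  calc 1/((n:ℝ)+x)^2 ≤ 1/(min x 1 * ((n:ℝ)+1))^2 := by
        apply div_le_div_of_nonneg_left one_pos.le h5 h4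
  _ = (1/(min x 1))^2 * (1/((n:ℝ)+1)^2) := by
        rw [mul_pow]; field_simp
  _ ≤ _ := le_refl _

lemma summable_psi_terms (x : ℝ) (hx : 0 < x) :
    Summable (fun n : ℕ => 1/((n:ℝ)+1) - 1/((n:ℝ)+x)) := by
  have hc : 0 < min x 1 := lt_min hx one_pos
  apply Summable.of_norm_bounded (summable_sq_shift.mul_left (|x-1|/(min x 1)))
  intro n
  have h1 : min x 1 * ((n:ℝ)+1) ≤ (n:ℝ)+x := aux_ge x hx n
  have h2 : (0:ℝ) < (n:ℝ)+1 := by positivity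
  have h3 : (0:ℝ) < (n:ℝ)+x := by positivity
  have key : 1/((n:ℝ)+1) - 1/((n:ℝ)+x) = (x-1)/(((n:ℝ)+1)*((n:ℝ)+x)) := by
    field_simp
    ring
  rw [Real.norm_eq_abs, key, abs_div, abs_of_pos (show (0:ℝ) < ((n:ℝ)+1)*((n:ℝ)+x) by positivity)]
  have hrhs : |x-1|/(min x 1) * (1/((n:ℝ)+1)^2) = |x-1| / (min x 1 * ((n:ℝ)+1)^2) := by
    field_simp
  rw [hrhs]
  apply div_le_div_of_nonneg_left (abs_nonneg _) (by positivity)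
  nlinarith


lemma psi_def (x : ℝ) : psi x =
    -Real.eulerMascheroniConstant + ∑' n : ℕ, (1/((n:ℝ)+1) - 1/((n:ℝ)+x)) := rfl

lemma psiD_def (x : ℝ) : psiD x = ∑' n : ℕ, (1/((n:ℝ)+x)^2) := rfl



/-- Telescoping sum. -/
lemma hasSum_telescope (a : ℝ) (ha : 0 < a) :
    HasSum (fun n : ℕ => 1/((n:ℝ)+a) - 1/((n:ℝ)+a+1)) (1/a) := by
  have hnn : ∀ n : ℕ, 0 ≤ 1/((n:ℝ)+a) - 1/((n:ℝ)+a+1) := by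
    intro n
    have h1 : (0:ℝ) < (n:ℝ)+a := by positivity
    have : 1/((n:ℝ)+a+1) ≤ 1/((n:ℝ)+a) :=
      div_le_div_of_nonneg_left one_pos.le h1 (by linarith)
    linarith
  rw [hasSum_iff_tendsto_nat_of_nonneg hnn]
  have hsum : ∀ m : ℕ, ∑ n ∈ Finset.range m, (1/((n:ℝ)+a) - 1/((n:ℝ)+a+1))
      = 1/a - 1/((m:ℝ)+a) := by
    intro m
    have := Finset.sum_range_sub' (f := fun n : ℕ => 1/((n:ℝ)+a)) m
    simp only [Nat.cast_add, Nat.cast_one, Nat.cast_zero, zero_add] at this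
    rw [← this]
    apply Finset.sum_congr rfl
    intro i _
    ring_nf
  simp only [hsum]
  have h2 : Tendsto (fun m : ℕ => 1/((m:ℝ)+a)) atTop (𝓝 0) := by
    apply Tendsto.comp tendsto_inv_atTop_zero ?_ |>.congr (fun m => by rw [Function.comp_apply, one_div])
    exact tendsto_atTop_add_const_right atTop a tendsto_natCast_atTop_atTop
  simpa using (tendsto_const_nhds (x := 1/a)).sub h2

lemma psi_rec (x : ℝ) (hx : 0 < x) : psi (x+1) = psi x + 1/x := by
  rw [psi_def, psi_def]
  have h1 := summable_psi_terms (x+1) (by linarith)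
  have h2 := summable_psi_terms x hx
  have h3 : ∀ n : ℕ, (1/((n:ℝ)+1) - 1/((n:ℝ)+(x+1))) - (1/((n:ℝ)+1) - 1/((n:ℝ)+x))
      = 1/((n:ℝ)+x) - 1/((n:ℝ)+x+1) := by intro n; ring_nf
  have h4 : (∑' n : ℕ, (1/((n:ℝ)+1) - 1/((n:ℝ)+(x+1)))) - (∑' n : ℕ, (1/((n:ℝ)+1) - 1/((n:ℝ)+x)))
      = 1/x := by
    rw [← Summable.tsum_sub h1 h2]
    rw [tsum_congr h3]
    exact (hasSum_telescope x hx).tsum_eq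
  linarith

lemma psiD_rec (x : ℝ) (hx : 0 < x) : psiD x = 1/x^2 + psiD (x+1) := by
  rw [psiD_def, psiD_def]
  have h := Summable.tsum_eq_zero_add (summable_sq x hx)
  simp only [Nat.cast_zero, zero_add] at h
  rw [h]
  congr 1
  apply tsum_congr
  intro n
  push_cast
  ring_nf

lemma psi_one : psi 1 = -Real.eulerMascheroniConstant := by
  rw [psi_def]
  simp

lemma psi_mono {x y : ℝ} (hx : 0 < x) (hxy : x ≤ y) : psi x ≤ psi y := by
  rw [psi_def, psi_def]
  have hy : 0 < y := lt_of_lt_of_le hx hxy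
  apply add_le_add_right
  apply Summable.tsum_le_tsum _ (summable_psi_terms x hx) (summable_psi_terms y hy)
  intro n
  have h1 : (0:ℝ) < (n:ℝ)+x := by positivity
  have : 1/((n:ℝ)+y) ≤ 1/((n:ℝ)+x) :=
    div_le_div_of_nonneg_left one_pos.le h1 (by linarith)
  linarith

lemma psiD_nonneg (x : ℝ) : 0 ≤ psiD x := by
  rw [psiD_def]
  exact tsum_nonneg (fun n => one_div_nonneg.mpr (sq_nonneg _))

lemma psiD_le (y : ℝ) (hy : 1 < y) : psiD y ≤ 1/(y-1) := by
  rw [psiD_def]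
  have h := hasSum_telescope (y-1) (by linarith)
  rw [← h.tsum_eq]
  apply Summable.tsum_le_tsum _ (summable_sq y (by linarith)) h.summable
  intro n
  have hn : (0:ℝ) ≤ (n:ℝ) := n.cast_nonneg
  have h1 : (0:ℝ) < (n:ℝ)+(y-1) := by linarith
  have h2 : (0:ℝ) < (n:ℝ)+y := by linarith
  have : 1/((n:ℝ)+(y-1)) - 1/((n:ℝ)+(y-1)+1) = 1/(((n:ℝ)+y-1)*((n:ℝ)+y)) := by
    rw [div_sub_div _ _ (ne_of_gt h1) (by linarith)]
    congr 1 <;> ring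
  rw [this]
  have hpos : (0:ℝ) < ((n:ℝ)+y-1)*((n:ℝ)+y) := by nlinarith
  rw [div_le_div_iff₀ (by positivity) hpos]
  nlinarith

lemma hasDerivAt_psi (x : ℝ) (hx : 0 < x) : HasDerivAt psi (psiD x) x := by
  have hopen : IsOpen (Ioo (x/2) (x+1)) := isOpen_Ioo
  have hconn : IsPreconnected (Ioo (x/2) (x+1)) := (convex_Ioo _ _).isPreconnected
  have hmem : x ∈ Ioo (x/2) (x+1) := ⟨by linarith, by linarith⟩
  have hu : Summable (fun n : ℕ => 1/((n:ℝ)+x/2)^2) := summable_sq _ (by linarith)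
  have key : HasDerivAt (fun z => ∑' n : ℕ, (1/((n:ℝ)+1) - 1/((n:ℝ)+z)))
      (∑' n : ℕ, 1/((n:ℝ)+x)^2) x := by
    apply hasDerivAt_tsum_of_isPreconnected hu hopen hconn
      (g := fun (n : ℕ) (z : ℝ) => 1/((n:ℝ)+1) - 1/((n:ℝ)+z))
      (g' := fun (n : ℕ) (z : ℝ) => 1/((n:ℝ)+z)^2)
      ?_ ?_ hmem (summable_psi_terms x hx) hmem
    · intro n y hy
      have hy0 : 0 < (n:ℝ)+y := by
        have : x/2 < y := hy.1
        have : (0:ℝ) ≤ (n:ℝ) := n.cast_nonneg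
        nlinarith
      have h1 : HasDerivAt (fun z : ℝ => (n:ℝ)+z) 1 y := (hasDerivAt_id y).const_add _
      have h2 := h1.inv (ne_of_gt hy0)
      have h3 := (hasDerivAt_const y (1/((n:ℝ)+1))).sub h2
      convert h3 using 1
      · funext z; simp [one_div]
      · field_simp
        ring
    · intro n y hy
      have hy1 : x/2 < y := hy.1
      have hy0 : 0 < (n:ℝ)+x/2 := by positivity
      rw [Real.norm_eq_abs, abs_of_nonneg (by positivity)]
      apply div_le_div_of_nonneg_left one_pos.le (by positivity)
      have : (n:ℝ)+x/2 ≤ (n:ℝ)+y := by linarith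
      nlinarith
  have : psi = fun z => -Real.eulerMascheroniConstant
      + ∑' n : ℕ, (1/((n:ℝ)+1) - 1/((n:ℝ)+z)) := funext psi_def
  rw [this, psiD_def]
  exact key.const_add _




local notation "γ" => Real.eulerMascheroniConstant

noncomputable def lg (x : ℝ) : ℝ := Real.log (Real.Gamma x)

lemma diff_lg {x : ℝ} (hx : 0 < x) : DifferentiableAt ℝ lg x := by
  apply DifferentiableAt.log
  · exact Real.differentiableAt_Gamma (fun m => by
      have : (0:ℝ) ≤ (m:ℝ) := m.cast_nonneg
      intro h; rw [h] at hx; linarith)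
  · exact (Real.Gamma_pos_of_pos hx).ne'

lemma lg_rec (x : ℝ) (hx : 0 < x) : deriv lg (x+1) = deriv lg x + 1/x := by
  rw [← deriv_comp_add_const, one_div, ← Real.deriv_log,
    ← deriv_add (diff_lg hx) (Real.differentiableAt_log hx.ne')]
  apply Filter.EventuallyEq.deriv_eq
  filter_upwards [eventually_gt_nhds hx] with y hy
  simp only [lg, Real.Gamma_add_one hy.ne', Real.log_mul hy.ne'
    (Real.Gamma_pos_of_pos hy).ne', add_comm]
  simp only [Pi.add_apply, lg]; ring

lemma lg_one : deriv lg 1 = -γ := by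
  have h1 : deriv Real.Gamma 1 = -γ := by
    have := Real.deriv_Gamma_nat 0
    simpa using this
  have h2 : HasDerivAt Real.Gamma (-γ) 1 := Real.hasDerivAt_Gamma_one
  have h3 : HasDerivAt lg (-γ / Real.Gamma 1) 1 := h2.log (by
    rw [Real.Gamma_one]; norm_num)
  rw [h3.deriv, Real.Gamma_one]
  norm_num

-- derivative of lg at natural numbers equals psi there
lemma lg_nat (k : ℕ) : deriv lg ((k:ℝ)+1) = psi ((k:ℝ)+1) := by
  induction k with
  | zero => simp [lg_one, psi_one]
  | succ n ih =>
    have hn : (0:ℝ) < (n:ℝ)+1 := by positivity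
    have : ((n+1:ℕ):ℝ)+1 = ((n:ℝ)+1)+1 := by push_cast; ring
    rw [this, lg_rec _ hn, psi_rec _ hn, ih]

lemma mono_deriv_lg : MonotoneOn (deriv lg) (Ioi (0:ℝ)) := by
  have h := Real.convexOn_log_Gamma
  exact ConvexOn.monotoneOn_deriv h (fun x hx => diff_lg hx)

lemma diff_le (y : ℝ) (hy : 1 ≤ y) : |deriv lg y - psi y| ≤ 1/(⌊y⌋₊ : ℝ) := by
  obtain ⟨n, hn⟩ : ∃ n : ℕ, ⌊y⌋₊ = n := ⟨_, rfl⟩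
  rw [hn]
  have hn1 : 1 ≤ n := by
    rw [← hn]; exact Nat.le_floor (by exact_mod_cast hy)
  have hnr : (1:ℝ) ≤ (n:ℝ) := by exact_mod_cast hn1
  have hny : (n:ℝ) ≤ y := by rw [← hn]; exact Nat.floor_le (by linarith)
  have hyn : y ≤ (n:ℝ)+1 := by
    rw [← hn]; exact le_of_lt (Nat.lt_floor_add_one y)
  have hnpos : (0:ℝ) < n := by linarith
  have e1 : deriv lg (n:ℝ) = psi (n:ℝ) := by
    obtain ⟨k, rfl⟩ := Nat.exists_eq_succ_of_ne_zero (by omega : n ≠ 0)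
    have := lg_nat k
    rw [show ((k+1:ℕ):ℝ) = (k:ℝ)+1 by push_cast; ring]
    exact this
  have e2 : deriv lg ((n:ℝ)+1) = psi ((n:ℝ)+1) := lg_nat n
  have e3 : psi ((n:ℝ)+1) = psi (n:ℝ) + 1/(n:ℝ) := psi_rec _ hnpos
  have l1 : deriv lg (n:ℝ) ≤ deriv lg y :=
    mono_deriv_lg (mem_Ioi.mpr hnpos) (mem_Ioi.mpr (by linarith)) hny
  have l2 : deriv lg y ≤ deriv lg ((n:ℝ)+1) :=
    mono_deriv_lg (mem_Ioi.mpr (by linarith)) (mem_Ioi.mpr (by linarith)) hyn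
  have l3 : psi (n:ℝ) ≤ psi y := psi_mono hnpos hny
  have l4 : psi y ≤ psi ((n:ℝ)+1) := psi_mono (by linarith) hyn
  rw [abs_le]
  constructor <;> [linarith; linarith]

lemma deriv_lg_eq_psi {x : ℝ} (hx : 0 < x) : deriv lg x = psi x := by
  have key : ∀ m : ℕ, deriv lg x - psi x = deriv lg (x+m) - psi (x+m) := by
    intro m
    induction m with
    | zero => simp
    | succ n ih =>
      have hp : 0 < x+(n:ℝ) := by positivity
      have : x+((n+1:ℕ):ℝ) = (x+(n:ℝ))+1 := by push_cast; ring
      rw [this, lg_rec _ hp, psi_rec _ hp, ih]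
      ring
  have hlim : Tendsto (fun m : ℕ => deriv lg (x+m) - psi (x+m)) atTop (𝓝 0) := by
    apply squeeze_zero_norm' ?_ tendsto_one_div_atTop_nhds_zero_nat
    filter_upwards [eventually_ge_atTop 1] with m hm
    have h1 : (1:ℝ) ≤ x+(m:ℝ) := by
      have : (1:ℝ) ≤ (m:ℝ) := by exact_mod_cast hm
      linarith
    refine (diff_le _ h1).trans ?_
    have hfl : m ≤ ⌊x+(m:ℝ)⌋₊ := by
      apply Nat.le_floor
      push_cast
      linarith
    have h2 : (0:ℝ) < (m:ℝ) := by exact_mod_cast hm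
    apply div_le_div_of_nonneg_left one_pos.le h2
    exact_mod_cast hfl
  have := hlim.congr' (Filter.Eventually.of_forall (fun m => (key m).symm))
  have h0 : Tendsto (fun _ : ℕ => deriv lg x - psi x) atTop (𝓝 0) := this
  have heq : deriv lg x - psi x = 0 := tendsto_nhds_unique tendsto_const_nhds h0
  linarith


lemma deriv_lg_eq_psi_fun {x : ℝ} (hx : 0 < x) :
    deriv (fun u : ℝ => Real.log (Real.Gamma u)) x = psi x := deriv_lg_eq_psi hx


lemma hasDerivAt_log1p (t : ℝ) (ht : 0 ≤ t) :
    HasDerivAt (fun s : ℝ => Real.log (1+s)) (1/(1+t)) t := by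
  have h1 : HasDerivAt (fun s : ℝ => 1+s) 1 t := (hasDerivAt_id t).const_add 1
  simpa using h1.log (by linarith)

private lemma poly_le_aux (P : ℝ → ℝ) (P' : ℝ → ℝ)
    (hP : ∀ t, 0 ≤ t → HasDerivAt P (P' t) t)
    (hP' : ∀ t, 0 ≤ t → 0 ≤ P' t) (hP0 : P 0 = 0) :
    ∀ t, 0 ≤ t → 0 ≤ P t := by
  intro t ht
  have hmono : MonotoneOn P (Ici (0:ℝ)) := by
    apply monotoneOn_of_deriv_nonneg (convex_Ici 0)
    · intro s hs
      exact (hP s hs).continuousAt.continuousWithinAt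
    · intro s hs
      rw [interior_Ici] at hs
      exact ((hP s (le_of_lt hs)).differentiableAt).differentiableWithinAt
    · intro s hs
      rw [interior_Ici] at hs
      rw [(hP s (le_of_lt hs)).deriv]
      exact hP' s (le_of_lt hs)
  have := hmono (self_mem_Ici) (mem_Ici.mpr ht) ht
  rwa [hP0] at this

lemma log_ub (t : ℝ) (ht : 0 ≤ t) : Real.log (1+t) ≤ t - t^2/2 + t^3/3 := by
  have key := poly_le_aux (fun t => t - t^2/2 + t^3/3 - Real.log (1+t))
    (fun t => t^3/(1+t)) ?_ ?_ (by norm_num) t ht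
  · linarith
  · intro s hs
    have h1 := (((hasDerivAt_id s).sub (((hasDerivAt_pow 2 s)).div_const 2)).add
      ((hasDerivAt_pow 3 s).div_const 3)).sub (hasDerivAt_log1p s hs)
    refine h1.congr_deriv ?_
    have : (1:ℝ)+s ≠ 0 := by linarith
    field_simp
    ring
  · intro s hs
    positivity

lemma log_lb (t : ℝ) (ht : 0 ≤ t) : t - t^2/2 + t^3/3 - t^4/4 ≤ Real.log (1+t) := by
  have key := poly_le_aux
    (fun t => Real.log (1+t) - (t - t^2/2 + t^3/3 - t^4/4))
    (fun t => t^4/(1+t)) ?_ ?_ (by norm_num) t ht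
  · linarith
  · intro s hs
    have h1 := (hasDerivAt_log1p s hs).sub
      ((((hasDerivAt_id s).sub (((hasDerivAt_pow 2 s)).div_const 2)).add
      ((hasDerivAt_pow 3 s).div_const 3)).sub ((hasDerivAt_pow 4 s).div_const 4))
    refine h1.congr_deriv ?_
    have : (1:ℝ)+s ≠ 0 := by linarith
    field_simp
    ring
  · intro s hs
    positivity

lemma log_ub5 (t : ℝ) (ht : 0 ≤ t) :
    Real.log (1+t) ≤ t - t^2/2 + t^3/3 - t^4/4 + t^5/5 := by
  have key := poly_le_aux
    (fun t => (t - t^2/2 + t^3/3 - t^4/4 + t^5/5) - Real.log (1+t))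
    (fun t => t^5/(1+t)) ?_ ?_ (by norm_num) t ht
  · linarith
  · intro s hs
    have h1 := ((((hasDerivAt_id s).sub (((hasDerivAt_pow 2 s)).div_const 2)).add
      ((hasDerivAt_pow 3 s).div_const 3)).sub ((hasDerivAt_pow 4 s).div_const 4)).add
      ((hasDerivAt_pow 5 s).div_const 5) |>.sub (hasDerivAt_log1p s hs)
    refine h1.congr_deriv ?_
    have : (1:ℝ)+s ≠ 0 := by linarith
    field_simp
    ring
  · intro s hs
    positivity

noncomputable def Hfun (x : ℝ) : ℝ := Real.log x - 1/(2*x) - 1/(12*x^2)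

noncomputable def Ffun (x : ℝ) : ℝ := 1/x + 1/(2*x^2) + 1/(6*x^3)

lemma log_succ_sub (y : ℝ) (hy : 0 < y) :
    Real.log (y+1) - Real.log y = Real.log (1+1/y) := by
  rw [← Real.log_div (by linarith) (ne_of_gt hy)]
  congr 1
  field_simp

/-- The local error in the Stirling-type approximation of `psi`. -/
lemma cBound (y : ℝ) (hy : 0 < y) :
    |1/y - (Hfun (y+1) - Hfun y)| ≤ 1/(y^4*(y+1)) := by
  have hy1 : (0:ℝ) < y+1 := by linarith
  have hyne : y ≠ 0 := ne_of_gt hy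
  have hy1ne : y+1 ≠ 0 := ne_of_gt hy1
  have ht : 0 ≤ 1/y := by positivity
  set t : ℝ := 1/y with htdef
  have hH : Hfun (y+1) - Hfun y
      = Real.log (1+t) - 1/(2*(y+1)) + 1/(2*y) - 1/(12*(y+1)^2) + 1/(12*y^2) := by
    simp only [Hfun]
    rw [← log_succ_sub y hy]
    ring
  -- c = 1/y - (Hfun(y+1) - Hfun y)
  have hc : 1/y - (Hfun (y+1) - Hfun y)
      = (1/y - Real.log (1+t)) + 1/(2*(y+1)) - 1/(2*y) + 1/(12*(y+1)^2) - 1/(12*y^2) := by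
    rw [hH]; ring
  -- c₀ : the value if log were replaced by its quartic approx
  have hc0 : (1/y - (t - t^2/2 + t^3/3 - t^4/4)) + 1/(2*(y+1)) - 1/(2*y)
      + 1/(12*(y+1)^2) - 1/(12*y^2) = (2*y+3)/(12*y^4*(y+1)^2) := by
    rw [htdef]
    field_simp
    ring
  have hc0_nonneg : (0:ℝ) ≤ (2*y+3)/(12*y^4*(y+1)^2) := by positivity
  have hc0_le : (2*y+3)/(12*y^4*(y+1)^2) ≤ 1/(y^4*(y+1)) := by
    rw [div_le_div_iff₀ (by positivity) (by positivity)]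
    nlinarith [pow_pos hy 4, sq_nonneg y]
  have hlogub := log_lb t ht   -- lower bound on log gives upper bound on c
  have hupper : 1/y - (Hfun (y+1) - Hfun y) ≤ 1/(y^4*(y+1)) := by
    rw [hc]
    linarith [hlogub, hc0, hc0_le]
  have hlower : -(1/(y^4*(y+1))) ≤ 1/y - (Hfun (y+1) - Hfun y) := by
    rcases le_total 1 y with h1y | h1y
    · -- y ≥ 1 : use quintic upper bound on log
      have hub := log_ub5 t ht
      have hslack : t^5/5 ≤ 1/(y^4*(y+1)) := by
        rw [htdef, div_pow, one_pow, div_div]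
        rw [div_le_div_iff₀ (by positivity) (by positivity)]
        nlinarith [pow_pos hy 4, pow_pos hy 5]
      rw [hc]
      linarith [hc0, hc0_nonneg, hub, hslack]
    · -- y ≤ 1 : use cubic upper bound on log
      have hub := log_ub t ht
      have hslack : t^4/4 ≤ 1/(y^4*(y+1)) := by
        rw [htdef, div_pow, one_pow, div_div]
        rw [div_le_div_iff₀ (by positivity) (by positivity)]
        nlinarith [pow_pos hy 4]
      rw [hc]
      linarith [hc0, hc0_nonneg, hub, hslack]
  rw [abs_le]
  exact ⟨hlower, hupper⟩

/-- The local error for `psiD` is exactly `-1/(6y³(y+1)³)`. -/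
lemma dIdentity (y : ℝ) (hy : 0 < y) :
    1/y^2 - (Ffun y - Ffun (y+1)) = -(1/(6*y^3*(y+1)^3)) := by
  have hy1 : (0:ℝ) < y+1 := by linarith
  simp only [Ffun]
  field_simp
  ring

lemma step4 (y : ℝ) (hy : 0 < y) : 1/(y+1)^5 ≤ 1/(4*y^4) - 1/(4*(y+1)^4) := by
  have hy1 : (0:ℝ) < y+1 := by linarith
  have key : 4*y^4 ≤ ((y+1)^4-y^4)*(y+1) := by nlinarith [pow_nonneg hy.le 3, sq_nonneg y]
  have key2 := mul_le_mul_of_nonneg_right key (by positivity : (0:ℝ) ≤ (y+1)^4)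
  rw [div_sub_div _ _ (by positivity) (by positivity),
    div_le_div_iff₀ (by positivity) (by positivity)]
  nlinarith [key2]

lemma step5 (y : ℝ) (hy : 0 < y) : 1/(y+1)^6 ≤ 1/(5*y^5) - 1/(5*(y+1)^5) := by
  have hy1 : (0:ℝ) < y+1 := by linarith
  have key : 5*y^5 ≤ ((y+1)^5-y^5)*(y+1) := by
    nlinarith [pow_nonneg hy.le 4, pow_nonneg hy.le 3, sq_nonneg y]
  have key2 := mul_le_mul_of_nonneg_right key (by positivity : (0:ℝ) ≤ (y+1)^5)
  rw [div_sub_div _ _ (by positivity) (by positivity),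
    div_le_div_iff₀ (by positivity) (by positivity)]
  nlinarith [key2]

lemma tail_bound4 (x : ℝ) (hx : 0 < x) (m : ℕ) :
    ∑ n ∈ Finset.range m, 1/(x+(n:ℝ)+1)^5 ≤ 1/(4*x^4) := by
  have key : ∀ n ∈ Finset.range m, 1/(x+(n:ℝ)+1)^5
      ≤ (fun n : ℕ => 1/(4*(x+(n:ℝ))^4)) n - (fun n : ℕ => 1/(4*(x+(n:ℝ))^4)) (n+1) := by
    intro n _
    have hy : (0:ℝ) < x+(n:ℝ) := by positivity
    have h := step4 (x+(n:ℝ)) hy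
    simp only
    have hcast : x+(((n:ℕ)+1:ℕ):ℝ) = (x+(n:ℝ))+1 := by push_cast; ring
    rw [hcast]
    exact h
  calc ∑ n ∈ Finset.range m, 1/(x+(n:ℝ)+1)^5
      ≤ ∑ n ∈ Finset.range m, ((fun n : ℕ => 1/(4*(x+(n:ℝ))^4)) n
          - (fun n : ℕ => 1/(4*(x+(n:ℝ))^4)) (n+1)) := Finset.sum_le_sum key
    _ = 1/(4*(x+((0:ℕ):ℝ))^4) - 1/(4*(x+(m:ℝ))^4) := by
        rw [Finset.sum_range_sub' (f := fun n : ℕ => 1/(4*(x+(n:ℝ))^4)) m]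
    _ ≤ 1/(4*x^4) := by
        have h1 : (0:ℝ) ≤ 1/(4*(x+(m:ℝ))^4) := by positivity
        have h2 : x+((0:ℕ):ℝ) = x := by norm_num
        rw [h2]
        linarith

lemma tail_bound5 (x : ℝ) (hx : 0 < x) (m : ℕ) :
    ∑ n ∈ Finset.range m, 1/(x+(n:ℝ)+1)^6 ≤ 1/(5*x^5) := by
  have key : ∀ n ∈ Finset.range m, 1/(x+(n:ℝ)+1)^6
      ≤ (fun n : ℕ => 1/(5*(x+(n:ℝ))^5)) n - (fun n : ℕ => 1/(5*(x+(n:ℝ))^5)) (n+1) := by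
    intro n _
    have hy : (0:ℝ) < x+(n:ℝ) := by positivity
    have h := step5 (x+(n:ℝ)) hy
    simp only
    have hcast : x+(((n:ℕ)+1:ℕ):ℝ) = (x+(n:ℝ))+1 := by push_cast; ring
    rw [hcast]
    exact h
  calc ∑ n ∈ Finset.range m, 1/(x+(n:ℝ)+1)^6
      ≤ ∑ n ∈ Finset.range m, ((fun n : ℕ => 1/(5*(x+(n:ℝ))^5)) n
          - (fun n : ℕ => 1/(5*(x+(n:ℝ))^5)) (n+1)) := Finset.sum_le_sum key
    _ = 1/(5*(x+((0:ℕ):ℝ))^5) - 1/(5*(x+(m:ℝ))^5) := by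
        rw [Finset.sum_range_sub' (f := fun n : ℕ => 1/(5*(x+(n:ℝ))^5)) m]
    _ ≤ 1/(5*x^5) := by
        have h1 : (0:ℝ) ≤ 1/(5*(x+(m:ℝ))^5) := by positivity
        have h2 : x+((0:ℕ):ℝ) = x := by norm_num
        rw [h2]
        linarith





lemma psi_nat (k : ℕ) : psi ((k:ℝ)+1) = -γ + ((harmonic k : ℚ) : ℝ) := by
  induction k with
  | zero => simpa using psi_one
  | succ n ih =>
    have hp : (0:ℝ) < (n:ℝ)+1 := by positivity
    have hc : ((n+1:ℕ):ℝ)+1 = ((n:ℝ)+1)+1 := by push_cast; ring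
    rw [hc, psi_rec _ hp, ih, harmonic_succ]
    push_cast
    ring

lemma psi_nat_near_log (k : ℕ) (hk : 1 ≤ k) :
    |psi ((k:ℝ)+1) - Real.log ((k:ℝ)+1)| ≤ 1/(k:ℝ) := by
  have hkr : (1:ℝ) ≤ (k:ℝ) := by exact_mod_cast hk
  have h1 : Real.eulerMascheroniSeq k < γ := Real.eulerMascheroniSeq_lt_eulerMascheroniConstant k
  have h2 : γ < Real.eulerMascheroniSeq' k := Real.eulerMascheroniConstant_lt_eulerMascheroniSeq' k
  rw [Real.eulerMascheroniSeq] at h1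
  have h2' : γ < ((harmonic k : ℚ) : ℝ) - Real.log k := by
    rwa [Real.eulerMascheroniSeq', if_neg (by omega : ¬ k = 0)] at h2
  have hlog : Real.log ((k:ℝ)+1) - Real.log (k:ℝ) ≤ 1/(k:ℝ) := by
    have hkpos : (0:ℝ) < (k:ℝ) := by linarith
    rw [← Real.log_div (by linarith) (ne_of_gt hkpos)]
    have : ((k:ℝ)+1)/(k:ℝ) = 1 + 1/(k:ℝ) := by field_simp
    rw [this]
    have := Real.log_le_sub_one_of_pos (show (0:ℝ) < 1+1/(k:ℝ) by positivity)
    linarith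
  rw [psi_nat, abs_le]
  constructor <;> linarith

/-- `psi(x+m) - log(x+m) → 0`. -/
lemma tendsto_psi_sub_log (x : ℝ) (hx : 0 < x) :
    Tendsto (fun m : ℕ => psi (x+(m:ℝ)) - Real.log (x+(m:ℝ))) atTop (𝓝 0) := by
  have hden : Tendsto (fun m : ℕ => (m:ℝ)-2) atTop atTop := by
    have := tendsto_atTop_add_const_right atTop (-2 : ℝ) tendsto_natCast_atTop_atTop
    simpa [sub_eq_add_neg] using this
  apply squeeze_zero_norm' ?_ (tendsto_const_nhds.div_atTop hden :
    Tendsto (fun m : ℕ => (3:ℝ)/((m:ℝ)-2)) atTop (𝓝 0))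
  filter_upwards [eventually_ge_atTop 3] with m hm
  set y : ℝ := x+(m:ℝ) with hy
  have hmr : (3:ℝ) ≤ (m:ℝ) := by exact_mod_cast hm
  have hy2 : 2 ≤ y := by rw [hy]; linarith
  obtain ⟨n, hn⟩ : ∃ n : ℕ, ⌊y⌋₊ = n := ⟨_, rfl⟩
  have hn2 : 2 ≤ n := by
    rw [← hn]; exact Nat.le_floor (by exact_mod_cast hy2)
  have hnm : (m:ℕ) ≤ n := by
    rw [← hn]; exact Nat.le_floor (by push_cast; linarith)
  have hnr : (2:ℝ) ≤ (n:ℝ) := by exact_mod_cast hn2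
  have hny : (n:ℝ) ≤ y := by rw [← hn]; exact Nat.floor_le (by linarith)
  have hyn : y ≤ (n:ℝ)+1 := by rw [← hn]; exact le_of_lt (Nat.lt_floor_add_one y)
  -- psi y ∈ [psi n, psi n + 1/n]
  obtain ⟨k, rfl⟩ : ∃ k : ℕ, n = k+1 := ⟨n-1, by omega⟩
  have hk1 : 1 ≤ k := by omega
  have hkr : (1:ℝ) ≤ (k:ℝ) := by exact_mod_cast hk1
  have hcast : ((k+1:ℕ):ℝ) = (k:ℝ)+1 := by push_cast; ring
  rw [hcast] at hnr hny hyn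
  have hpn := psi_nat_near_log k hk1
  have hrec : psi (((k:ℝ)+1)+1) = psi ((k:ℝ)+1) + 1/((k:ℝ)+1) := psi_rec _ (by linarith)
  have l1 : psi ((k:ℝ)+1) ≤ psi y := psi_mono (by linarith) hny
  have l2 : psi y ≤ psi (((k:ℝ)+1)+1) := psi_mono (by linarith) hyn
  have llog1 : Real.log ((k:ℝ)+1) ≤ Real.log y := Real.log_le_log (by linarith) hny
  have llog2 : Real.log y ≤ Real.log (((k:ℝ)+1)+1) := Real.log_le_log (by linarith) hyn
  have llog3 : Real.log (((k:ℝ)+1)+1) - Real.log ((k:ℝ)+1) ≤ 1/((k:ℝ)+1) := by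
    rw [← Real.log_div (by linarith) (by linarith)]
    have : (((k:ℝ)+1)+1)/((k:ℝ)+1) = 1 + 1/((k:ℝ)+1) := by field_simp
    rw [this]
    have := Real.log_le_sub_one_of_pos (show (0:ℝ) < 1+1/((k:ℝ)+1) by positivity)
    linarith
  have habs := abs_le.mp hpn
  have hb1 : 1/((k:ℝ)+1) ≤ 1/(k:ℝ) := by
    apply div_le_div_of_nonneg_left one_pos.le (by linarith)
    linarith
  have hkm : (m:ℝ) - 2 ≤ (k:ℝ) := by
    have : (m:ℝ) ≤ (k:ℝ)+1 := by exact_mod_cast hnm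
    linarith
  have hkinv : (0:ℝ) ≤ 1/(k:ℝ) := by positivity
  have hbound : |psi y - Real.log y| ≤ 3/(k:ℝ) := by
    have e : (3:ℝ)/(k:ℝ) = 1/(k:ℝ) + 1/(k:ℝ) + 1/(k:ℝ) := by ring
    rw [abs_le, e]
    constructor <;> linarith [habs.1, habs.2]
  rw [Real.norm_eq_abs]
  refine hbound.trans ?_
  apply div_le_div_of_nonneg_left (by norm_num) (by linarith)
  linarith

lemma tendsto_shift_atTop (x : ℝ) : Tendsto (fun m : ℕ => x+(m:ℝ)) atTop atTop :=
  tendsto_atTop_add_const_left atTop x tendsto_natCast_atTop_atTop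

lemma tendsto_aux_pow (x : ℝ) (c : ℝ) (a : ℝ) (ha : 0 < a) (p : ℕ) (hp : p ≠ 0) :
    Tendsto (fun m : ℕ => c/(a*(x+(m:ℝ))^p)) atTop (𝓝 0) := by
  apply Tendsto.div_atTop tendsto_const_nhds
  exact Tendsto.const_mul_atTop ha ((tendsto_pow_atTop hp).comp (tendsto_shift_atTop x))

lemma tendsto_r (x : ℝ) (hx : 0 < x) :
    Tendsto (fun m : ℕ => psi (x+(m:ℝ)) - Hfun (x+(m:ℝ))) atTop (𝓝 0) := by
  have h1 := tendsto_psi_sub_log x hx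
  have h2 := tendsto_aux_pow x 1 2 two_pos 1 one_ne_zero
  have h3 := tendsto_aux_pow x 1 12 (by norm_num) 2 (by norm_num)
  have hsum := (h1.add h2).add h3
  rw [show ((0:ℝ)+0)+0 = 0 by norm_num] at hsum
  apply hsum.congr
  intro m
  simp only [Hfun, pow_one]
  ring

/-- `psiD (x+m) → 0`. -/
lemma tendsto_psiD (x : ℝ) (hx : 0 < x) :
    Tendsto (fun m : ℕ => psiD (x+(m:ℝ))) atTop (𝓝 0) := by
  have hden : Tendsto (fun m : ℕ => x+(m:ℝ)-1) atTop atTop := by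
    have := tendsto_atTop_add_const_right atTop (-1 : ℝ) (tendsto_shift_atTop x)
    simpa [sub_eq_add_neg] using this
  apply squeeze_zero_norm' ?_ (tendsto_const_nhds.div_atTop hden :
    Tendsto (fun m : ℕ => (1:ℝ)/(x+(m:ℝ)-1)) atTop (𝓝 0))
  filter_upwards [eventually_ge_atTop 2] with m hm
  have hmr : (2:ℝ) ≤ (m:ℝ) := by exact_mod_cast hm
  have h1 : 1 < x+(m:ℝ) := by linarith
  rw [Real.norm_eq_abs, abs_of_nonneg (psiD_nonneg _)]
  exact psiD_le _ h1

lemma tendsto_s (x : ℝ) (hx : 0 < x) :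
    Tendsto (fun m : ℕ => psiD (x+(m:ℝ)) - Ffun (x+(m:ℝ))) atTop (𝓝 0) := by
  have h1 := tendsto_psiD x hx
  have h2 := tendsto_aux_pow x 1 1 one_pos 1 one_ne_zero
  have h3 := tendsto_aux_pow x 1 2 two_pos 2 (by norm_num)
  have h4 := tendsto_aux_pow x 1 6 (by norm_num) 3 (by norm_num)
  have hsum := ((h1.sub h2).sub h3).sub h4
  rw [show ((0:ℝ)-0)-0-0 = 0 by norm_num] at hsum
  apply hsum.congr
  intro m
  simp only [Ffun, pow_one]
  ring




lemma rBound (x : ℝ) (hx : 0 < x) : |psi x - Hfun x| ≤ 2/x^4 := by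
  have key : ∀ m : ℕ, psi (x+(m:ℝ)) - Hfun (x+(m:ℝ)) = (psi x - Hfun x)
      + ∑ n ∈ Finset.range m,
        (1/(x+(n:ℝ)) - (Hfun (x+(n:ℝ)+1) - Hfun (x+(n:ℝ)))) := by
    intro m
    induction m with
    | zero => simp
    | succ j ih =>
      have hp : (0:ℝ) < x+(j:ℝ) := by positivity
      have hc : x+((j+1:ℕ):ℝ) = (x+(j:ℝ))+1 := by push_cast; ring
      rw [hc, psi_rec _ hp, Finset.sum_range_succ]
      linarith [ih]
  have hsum : ∀ m : ℕ, ∑ n ∈ Finset.range m,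
      |1/(x+(n:ℝ)) - (Hfun (x+(n:ℝ)+1) - Hfun (x+(n:ℝ)))| ≤ 5/(4*x^4) := by
    intro m
    rcases m with _ | j
    · simp; positivity
    · rw [Finset.sum_range_succ']
      have h0 : |1/(x+((0:ℕ):ℝ)) - (Hfun (x+((0:ℕ):ℝ)+1) - Hfun (x+((0:ℕ):ℝ)))| ≤ 1/x^4 := by
        have := cBound x hx
        simp only [Nat.cast_zero, add_zero]
        refine this.trans ?_
        rw [div_le_div_iff₀ (by positivity) (by positivity)]
        nlinarith [pow_pos hx 4]
      have htail : ∑ n ∈ Finset.range j,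
          |1/(x+((n+1:ℕ):ℝ)) - (Hfun (x+((n+1:ℕ):ℝ)+1) - Hfun (x+((n+1:ℕ):ℝ)))| ≤ 1/(4*x^4) := by
        refine le_trans (Finset.sum_le_sum (fun n _ => ?_)) (tail_bound4 x hx j)
        have hyp : (0:ℝ) < x+(n:ℝ)+1 := by positivity
        have hc : x+((n+1:ℕ):ℝ) = x+(n:ℝ)+1 := by push_cast; ring
        rw [hc]
        refine (cBound _ hyp).trans ?_
        rw [div_le_div_iff₀ (by positivity) (by positivity)]
        nlinarith [pow_pos hyp 4, pow_pos hyp 5]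
      have e : (5:ℝ)/(4*x^4) = 1/(4*x^4) + 1/x^4 := by ring
      rw [e]
      exact add_le_add htail h0
  have hm : ∀ m : ℕ, |psi x - Hfun x|
      ≤ 5/(4*x^4) + |psi (x+(m:ℝ)) - Hfun (x+(m:ℝ))| := by
    intro m
    have hk := key m
    have h1 : |psi x - Hfun x| ≤ |psi (x+(m:ℝ)) - Hfun (x+(m:ℝ))|
        + ∑ n ∈ Finset.range m,
          |1/(x+(n:ℝ)) - (Hfun (x+(n:ℝ)+1) - Hfun (x+(n:ℝ)))| := by
      have : psi x - Hfun x = (psi (x+(m:ℝ)) - Hfun (x+(m:ℝ)))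
          - ∑ n ∈ Finset.range m,
            (1/(x+(n:ℝ)) - (Hfun (x+(n:ℝ)+1) - Hfun (x+(n:ℝ)))) := by
        rw [hk]; ring
      rw [this]
      refine (abs_sub _ _).trans ?_
      gcongr
      exact Finset.abs_sum_le_sum_abs _ _
    linarith [hsum m]
  have hlim : Tendsto (fun m : ℕ => 5/(4*x^4) + |psi (x+(m:ℝ)) - Hfun (x+(m:ℝ))|)
      atTop (𝓝 (5/(4*x^4))) := by
    have := (tendsto_r x hx).abs
    simp only [abs_zero] at this
    simpa using tendsto_const_nhds.add this
  have hfin : |psi x - Hfun x| ≤ 5/(4*x^4) := ge_of_tendsto' hlim hm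
  refine hfin.trans ?_
  rw [div_le_div_iff₀ (by positivity) (by positivity)]
  nlinarith [pow_pos hx 4]

lemma sBound (x : ℝ) (hx : 0 < x) : |psiD x - Ffun x| ≤ 1/x^5 := by
  have key : ∀ m : ℕ, psiD (x+(m:ℝ)) - Ffun (x+(m:ℝ)) = (psiD x - Ffun x)
      + ∑ n ∈ Finset.range m, 1/(6*(x+(n:ℝ))^3*(x+(n:ℝ)+1)^3) := by
    intro m
    induction m with
    | zero => simp
    | succ j ih =>
      have hp : (0:ℝ) < x+(j:ℝ) := by positivity
      have hc : x+((j+1:ℕ):ℝ) = (x+(j:ℝ))+1 := by push_cast; ring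
      have hrec : psiD ((x+(j:ℝ))+1) = psiD (x+(j:ℝ)) - 1/(x+(j:ℝ))^2 := by
        have := psiD_rec (x+(j:ℝ)) hp
        linarith
      have hd := dIdentity (x+(j:ℝ)) hp
      rw [hc, hrec, Finset.sum_range_succ]
      linarith [ih, hd]
  have hsum : ∀ m : ℕ, ∑ n ∈ Finset.range m, 1/(6*(x+(n:ℝ))^3*(x+(n:ℝ)+1)^3)
      ≤ 1/(5*x^5) := by
    intro m
    rcases m with _ | j
    · simp; positivity
    · rw [Finset.sum_range_succ']
      have h0 : 1/(6*(x+((0:ℕ):ℝ))^3*(x+((0:ℕ):ℝ)+1)^3) ≤ 1/(6*x^5) := by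
        simp only [Nat.cast_zero, add_zero]
        apply div_le_div_of_nonneg_left one_pos.le (by positivity)
        nlinarith [pow_pos hx 3, pow_pos hx 5, sq_nonneg x]
      have htail : ∑ n ∈ Finset.range j, 1/(6*(x+((n+1:ℕ):ℝ))^3*(x+((n+1:ℕ):ℝ)+1)^3)
          ≤ (1/6)*(1/(5*x^5)) := by
        have := tail_bound5 x hx j
        calc ∑ n ∈ Finset.range j, 1/(6*(x+((n+1:ℕ):ℝ))^3*(x+((n+1:ℕ):ℝ)+1)^3)
            ≤ ∑ n ∈ Finset.range j, (1/6)*(1/(x+(n:ℝ)+1)^6) := by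
              apply Finset.sum_le_sum
              intro n _
              have hyp : (0:ℝ) < x+(n:ℝ)+1 := by positivity
              have hc : x+((n+1:ℕ):ℝ) = x+(n:ℝ)+1 := by push_cast; ring
              rw [hc, div_mul_div_comm, one_mul]
              apply div_le_div_of_nonneg_left one_pos.le (by positivity)
              have hcube : (x+(n:ℝ)+1)^3 ≤ ((x+(n:ℝ)+1)+1)^3 :=
                pow_le_pow_left₀ hyp.le (by linarith) 3
              have hmul := mul_le_mul_of_nonneg_left hcube
                (by positivity : (0:ℝ) ≤ 6*(x+(n:ℝ)+1)^3)
              nlinarith [hmul]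
          _ = (1/6)*∑ n ∈ Finset.range j, 1/(x+(n:ℝ)+1)^6 := by
              rw [Finset.mul_sum]
          _ ≤ (1/6)*(1/(5*x^5)) := by
              apply mul_le_mul_of_nonneg_left this (by norm_num)
      have hx5 : (0:ℝ) < x^5 := pow_pos hx 5
      have e : (1:ℝ)/6*(1/(5*x^5)) + 1/(6*x^5) ≤ 1/(5*x^5) := by
        rw [div_mul_div_comm, one_mul,
          div_add_div _ _ (by positivity) (by positivity),
          div_le_div_iff₀ (by positivity) (by positivity)]
        nlinarith [hx5]
      calc _ ≤ (1:ℝ)/6*(1/(5*x^5)) + 1/(6*x^5) := add_le_add htail h0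
        _ ≤ 1/(5*x^5) := e
  have hm : ∀ m : ℕ, |psiD x - Ffun x|
      ≤ 1/(5*x^5) + |psiD (x+(m:ℝ)) - Ffun (x+(m:ℝ))| := by
    intro m
    have hk := key m
    have hnn : (0:ℝ) ≤ ∑ n ∈ Finset.range m, 1/(6*(x+(n:ℝ))^3*(x+(n:ℝ)+1)^3) := by
      apply Finset.sum_nonneg
      intro n _
      positivity
    have h1 : psiD x - Ffun x = (psiD (x+(m:ℝ)) - Ffun (x+(m:ℝ)))
        - ∑ n ∈ Finset.range m, 1/(6*(x+(n:ℝ))^3*(x+(n:ℝ)+1)^3) := by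
      rw [hk]; ring
    rw [h1]
    refine (abs_sub _ _).trans ?_
    have : |∑ n ∈ Finset.range m, 1/(6*(x+(n:ℝ))^3*(x+(n:ℝ)+1)^3)|
        = ∑ n ∈ Finset.range m, 1/(6*(x+(n:ℝ))^3*(x+(n:ℝ)+1)^3) := abs_of_nonneg hnn
    rw [this]
    linarith [hsum m]
  have hlim : Tendsto (fun m : ℕ => 1/(5*x^5) + |psiD (x+(m:ℝ)) - Ffun (x+(m:ℝ))|)
      atTop (𝓝 (1/(5*x^5))) := by
    have := (tendsto_s x hx).abs
    simp only [abs_zero] at this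
    simpa using tendsto_const_nhds.add this
  have hfin : |psiD x - Ffun x| ≤ 1/(5*x^5) := ge_of_tendsto' hlim hm
  refine hfin.trans ?_
  apply div_le_div_of_nonneg_left one_pos.le (pow_pos hx 5)
  nlinarith [pow_pos hx 5]





lemma hasDerivAt_logGamma {y : ℝ} (hy : 0 < y) :
    HasDerivAt (fun u : ℝ => Real.log (Real.Gamma u)) (psi y) y := by
  have hne : ∀ m : ℕ, y ≠ -(m:ℝ) := by
    intro m
    have : (0:ℝ) ≤ (m:ℝ) := m.cast_nonneg
    intro h; rw [h] at hy; linarith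
  have hd := (Real.differentiableAt_Gamma hne).hasDerivAt
  have h := hd.log (Real.Gamma_pos_of_pos hy).ne'
  have hdv : deriv (fun u : ℝ => Real.log (Real.Gamma u)) y
      = deriv Real.Gamma y / Real.Gamma y := h.deriv
  have := deriv_lg_eq_psi_fun hy
  rw [hdv] at this
  rwa [this] at h

lemma Lam_two_eq (N : ℕ) : CbetaE.Lam 2 N = fun z =>
    ∑ k ∈ Finset.range N, (Real.log (Real.Gamma ((k:ℝ)+1))
      + Real.log (Real.Gamma ((k:ℝ)+1+z)) - 2*Real.log (Real.Gamma ((k:ℝ)+1+z/2))) := by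
  funext z
  unfold CbetaE.Lam
  apply Finset.sum_congr rfl
  intro k _
  norm_num

lemma hasDerivAt_Lam (N : ℕ) (z : ℝ) (hz : 0 < z) :
    HasDerivAt (CbetaE.Lam 2 N)
      (∑ k ∈ Finset.range N, (psi ((k:ℝ)+1+z) - psi ((k:ℝ)+1+z/2))) z := by
  rw [Lam_two_eq N]
  apply HasDerivAt.fun_sum
  intro k _
  have hk : (0:ℝ) ≤ (k:ℝ) := k.cast_nonneg
  have hp1 : (0:ℝ) < (k:ℝ)+1+z := by linarith
  have hp2 : (0:ℝ) < (k:ℝ)+1+z/2 := by linarith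
  have inner1 : HasDerivAt (fun z : ℝ => (k:ℝ)+1+z) 1 z := (hasDerivAt_id z).const_add _
  have h1 : HasDerivAt (fun z : ℝ => Real.log (Real.Gamma ((k:ℝ)+1+z)))
      (psi ((k:ℝ)+1+z)) z := by
    have := (hasDerivAt_logGamma hp1).comp z inner1
    exact this.congr_deriv (mul_one _)
  have inner2 : HasDerivAt (fun z : ℝ => (k:ℝ)+1+z/2) (1/2) z := by
    have := ((hasDerivAt_id z).div_const 2).const_add ((k:ℝ)+1)
    simpa using this
  have h2 : HasDerivAt (fun z : ℝ => Real.log (Real.Gamma ((k:ℝ)+1+z/2)))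
      (psi ((k:ℝ)+1+z/2) * (1/2)) z :=
    by have := (hasDerivAt_logGamma hp2).comp z inner2; exact this
  have h3 := ((hasDerivAt_const z (Real.log (Real.Gamma ((k:ℝ)+1)))).add h1).sub
    (h2.const_mul 2)
  refine h3.congr_deriv ?_
  ring

noncomputable def L1fun (N : ℕ) (z : ℝ) : ℝ :=
  ∑ k ∈ Finset.range N, (psi ((k:ℝ)+1+z) - psi ((k:ℝ)+1+z/2))

lemma hasDerivAt_L1fun (N : ℕ) (z : ℝ) (hz : 0 < z) :
    HasDerivAt (L1fun N)
      (∑ k ∈ Finset.range N, (psiD ((k:ℝ)+1+z) - psiD ((k:ℝ)+1+z/2) * (1/2))) z := by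
  unfold L1fun
  apply HasDerivAt.fun_sum
  intro k _
  have hk : (0:ℝ) ≤ (k:ℝ) := k.cast_nonneg
  have hp1 : (0:ℝ) < (k:ℝ)+1+z := by linarith
  have hp2 : (0:ℝ) < (k:ℝ)+1+z/2 := by linarith
  have inner1 : HasDerivAt (fun z : ℝ => (k:ℝ)+1+z) 1 z := (hasDerivAt_id z).const_add _
  have h1 : HasDerivAt (fun z : ℝ => psi ((k:ℝ)+1+z)) (psiD ((k:ℝ)+1+z)) z := by
    have := (hasDerivAt_psi _ hp1).comp z inner1
    exact this.congr_deriv (mul_one _)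
  have inner2 : HasDerivAt (fun z : ℝ => (k:ℝ)+1+z/2) (1/2) z := by
    have := ((hasDerivAt_id z).div_const 2).const_add ((k:ℝ)+1)
    simpa using this
  have h2 : HasDerivAt (fun z : ℝ => psi ((k:ℝ)+1+z/2)) (psiD ((k:ℝ)+1+z/2) * (1/2)) z :=
    by have := (hasDerivAt_psi _ hp2).comp z inner2; exact this
  exact h1.sub h2

lemma deriv_Lam_eq (N : ℕ) (z : ℝ) (hz : 0 < z) :
    deriv (CbetaE.Lam 2 N) z = L1fun N z := (hasDerivAt_Lam N z hz).deriv

lemma deriv_deriv_Lam (N : ℕ) (z : ℝ) (hz : 0 < z) :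
    deriv (deriv (CbetaE.Lam 2 N)) z
      = ∑ k ∈ Finset.range N, (psiD ((k:ℝ)+1+z) - psiD ((k:ℝ)+1+z/2) * (1/2)) := by
  have hev : deriv (CbetaE.Lam 2 N) =ᶠ[𝓝 z] L1fun N := by
    filter_upwards [isOpen_Ioi.mem_nhds (mem_Ioi.mpr hz)] with w hw
    exact deriv_Lam_eq N w hw
  rw [hev.deriv_eq]
  exact (hasDerivAt_L1fun N z hz).deriv

lemma sum_psi (N : ℕ) (a : ℝ) (ha : 0 < a) :
    ∑ k ∈ Finset.range N, psi ((k:ℝ)+1+a)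
      = ((N:ℝ)+a)*psi ((N:ℝ)+a) - a*psi a - N := by
  induction N with
  | zero => simp
  | succ n ih =>
    have hp : (0:ℝ) < (n:ℝ)+a := by positivity
    have hc1 : ((n+1:ℕ):ℝ)+a = ((n:ℝ)+a)+1 := by push_cast; ring
    have hc2 : ((n:ℕ):ℝ)+1+a = ((n:ℝ)+a)+1 := by ring
    rw [Finset.sum_range_succ, ih, hc1, hc2, psi_rec _ hp]
    push_cast
    field_simp
    ring

lemma sum_psiD (N : ℕ) (a : ℝ) (ha : 0 < a) :
    ∑ k ∈ Finset.range N, psiD ((k:ℝ)+1+a)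
      = psi ((N:ℝ)+a) + ((N:ℝ)+a)*psiD ((N:ℝ)+a) - psi a - a*psiD a := by
  induction N with
  | zero => simp
  | succ n ih =>
    have hp : (0:ℝ) < (n:ℝ)+a := by positivity
    have hc1 : ((n+1:ℕ):ℝ)+a = ((n:ℝ)+a)+1 := by push_cast; ring
    have hc2 : ((n:ℕ):ℝ)+1+a = ((n:ℝ)+a)+1 := by ring
    have hD : psiD (((n:ℝ)+a)+1) = psiD ((n:ℝ)+a) - 1/((n:ℝ)+a)^2 := by
      have := psiD_rec ((n:ℝ)+a) hp
      linarith
    rw [Finset.sum_range_succ, ih, hc1, hc2, psi_rec _ hp, hD]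
    push_cast
    field_simp
    ring




lemma err1 {x δ : ℝ} (hδ : 0 < δ) (hx : δ ≤ x) : |x*(psi x - Hfun x)| ≤ 2/δ^3 := by
  have hx0 : 0 < x := lt_of_lt_of_le hδ hx
  rw [abs_mul, abs_of_pos hx0]
  calc x*|psi x - Hfun x| ≤ x*(2/x^4) :=
        mul_le_mul_of_nonneg_left (rBound x hx0) hx0.le
  _ = 2/x^3 := by field_simp
  _ ≤ 2/δ^3 := by
      apply div_le_div_of_nonneg_left (by norm_num) (by positivity)
      exact pow_le_pow_left₀ hδ.le hx 3

lemma err0 {x δ : ℝ} (hδ : 0 < δ) (hx : δ ≤ x) : |psi x - Hfun x| ≤ 2/δ^4 := by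
  have hx0 : 0 < x := lt_of_lt_of_le hδ hx
  refine (rBound x hx0).trans ?_
  apply div_le_div_of_nonneg_left (by norm_num) (by positivity)
  exact pow_le_pow_left₀ hδ.le hx 4

lemma errD {x δ : ℝ} (hδ : 0 < δ) (hx : δ ≤ x) : |x*(psiD x - Ffun x)| ≤ 1/δ^4 := by
  have hx0 : 0 < x := lt_of_lt_of_le hδ hx
  rw [abs_mul, abs_of_pos hx0]
  calc x*|psiD x - Ffun x| ≤ x*(1/x^5) :=
        mul_le_mul_of_nonneg_left (sBound x hx0) hx0.le
  _ = 1/x^4 := by field_simp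
  _ ≤ 1/δ^4 := by
      apply div_le_div_of_nonneg_left (by norm_num) (by positivity)
      exact pow_le_pow_left₀ hδ.le hx 4

lemma mainI (N : ℕ) (hN : 1 ≤ N) (δ : ℝ) (hδ : 0 < δ) :
    ((N:ℝ)+2*δ)*Hfun ((N:ℝ)+2*δ) - 2*δ*Hfun (2*δ)
      - (((N:ℝ)+δ)*Hfun ((N:ℝ)+δ) - δ*Hfun δ)
    = δ * Real.log ((N : ℝ) / (4 * δ))
      + (N : ℝ) * ((1 + 2 * δ / N) * Real.log (1 + 2 * δ / N)
          - (1 + δ / N) * Real.log (1 + δ / N))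
      + 1 / 12 * (1 / ((N : ℝ) + δ) - 1 / (2 * δ) - 1 / ((N : ℝ) + 2 * δ)) := by
  have hN0 : (0:ℝ) < N := by exact_mod_cast hN
  have hNδ : (0:ℝ) < (N:ℝ)+δ := by linarith
  have hN2δ : (0:ℝ) < (N:ℝ)+2*δ := by linarith
  have e1 : Real.log ((N:ℝ)/(4*δ)) = Real.log N - (Real.log 4 + Real.log δ) := by
    rw [Real.log_div hN0.ne' (by positivity), Real.log_mul (by norm_num) hδ.ne']
  have e2 : Real.log (1+2*δ/(N:ℝ)) = Real.log ((N:ℝ)+2*δ) - Real.log N := by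
    rw [show (1:ℝ)+2*δ/(N:ℝ) = ((N:ℝ)+2*δ)/N by field_simp,
      Real.log_div hN2δ.ne' hN0.ne']
  have e3 : Real.log (1+δ/(N:ℝ)) = Real.log ((N:ℝ)+δ) - Real.log N := by
    rw [show (1:ℝ)+δ/(N:ℝ) = ((N:ℝ)+δ)/N by field_simp,
      Real.log_div hNδ.ne' hN0.ne']
  have e4 : Real.log (2*δ) = Real.log 2 + Real.log δ := Real.log_mul (by norm_num) hδ.ne'
  have e5 : Real.log (4:ℝ) = 2*Real.log 2 := by
    rw [show (4:ℝ) = 2*2 by norm_num, Real.log_mul (by norm_num) (by norm_num)]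
    ring
  simp only [Hfun]
  rw [e1, e2, e3, e4, e5]
  field_simp
  ring

lemma mainII (N : ℕ) (hN : 1 ≤ N) (δ : ℝ) (hδ : 0 < δ) :
    (Hfun ((N:ℝ)+2*δ) + ((N:ℝ)+2*δ)*Ffun ((N:ℝ)+2*δ) - Hfun (2*δ) - 2*δ*Ffun (2*δ))
      - (1/2)*(Hfun ((N:ℝ)+δ) + ((N:ℝ)+δ)*Ffun ((N:ℝ)+δ) - Hfun δ - δ*Ffun δ)
    = 1 / 2 * Real.log ((N : ℝ) / (4 * δ))
      + (Real.log (1 + 2 * δ / N) - 1 / 2 * Real.log (1 + δ / N))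
      + 1 / 12 * (1 / ((N : ℝ) + 2 * δ) ^ 2 - 1 / (2 * ((N : ℝ) + δ) ^ 2)
          + 1 / (4 * δ ^ 2)) := by
  have hN0 : (0:ℝ) < N := by exact_mod_cast hN
  have hNδ : (0:ℝ) < (N:ℝ)+δ := by linarith
  have hN2δ : (0:ℝ) < (N:ℝ)+2*δ := by linarith
  have e1 : Real.log ((N:ℝ)/(4*δ)) = Real.log N - (Real.log 4 + Real.log δ) := by
    rw [Real.log_div hN0.ne' (by positivity), Real.log_mul (by norm_num) hδ.ne']
  have e2 : Real.log (1+2*δ/(N:ℝ)) = Real.log ((N:ℝ)+2*δ) - Real.log N := by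
    rw [show (1:ℝ)+2*δ/(N:ℝ) = ((N:ℝ)+2*δ)/N by field_simp,
      Real.log_div hN2δ.ne' hN0.ne']
  have e3 : Real.log (1+δ/(N:ℝ)) = Real.log ((N:ℝ)+δ) - Real.log N := by
    rw [show (1:ℝ)+δ/(N:ℝ) = ((N:ℝ)+δ)/N by field_simp,
      Real.log_div hNδ.ne' hN0.ne']
  have e4 : Real.log (2*δ) = Real.log 2 + Real.log δ := Real.log_mul (by norm_num) hδ.ne'
  have e5 : Real.log (4:ℝ) = 2*Real.log 2 := by
    rw [show (4:ℝ) = 2*2 by norm_num, Real.log_mul (by norm_num) (by norm_num)]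
    ring
  simp only [Hfun, Ffun]
  rw [e1, e2, e3, e4, e5]
  field_simp
  ring

theorem final :
    ∃ C : ℝ, ∀ N : ℕ, 1 ≤ N → ∀ δ : ℝ, 0 < δ →
      |deriv (CbetaE.Lam 2 N) (2 * δ) -
          (δ * Real.log ((N : ℝ) / (4 * δ))
            + (N : ℝ) * ((1 + 2 * δ / N) * Real.log (1 + 2 * δ / N)
                - (1 + δ / N) * Real.log (1 + δ / N))
            + 1 / 12 * (1 / ((N : ℝ) + δ) - 1 / (2 * δ) - 1 / ((N : ℝ) + 2 * δ)))|
        ≤ C / δ ^ 3 ∧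
      |deriv (deriv (CbetaE.Lam 2 N)) (2 * δ) -
          (1 / 2 * Real.log ((N : ℝ) / (4 * δ))
            + (Real.log (1 + 2 * δ / N) - 1 / 2 * Real.log (1 + δ / N))
            + 1 / 12 * (1 / ((N : ℝ) + 2 * δ) ^ 2 - 1 / (2 * ((N : ℝ) + δ) ^ 2)
                + 1 / (4 * δ ^ 2)))|
        ≤ C / δ ^ 4 := by
  refine ⟨100, fun N hN δ hδ => ?_⟩
  have hN0 : (0:ℝ) < N := by exact_mod_cast hN
  have h2δ : (0:ℝ) < 2*δ := by linarith
  have hNδ : (0:ℝ) < (N:ℝ)+δ := by linarith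
  have hN2δ : (0:ℝ) < (N:ℝ)+2*δ := by linarith
  have hδN2δ : δ ≤ (N:ℝ)+2*δ := by linarith
  have hδNδ : δ ≤ (N:ℝ)+δ := by linarith
  have hδ2δ : δ ≤ 2*δ := by linarith
  have hhalf : ∀ k : ℕ, (k:ℝ)+1+(2*δ)/2 = (k:ℝ)+1+δ := by intro k; ring
  constructor
  · -- first derivative
    have hval : deriv (CbetaE.Lam 2 N) (2*δ)
        = (((N:ℝ)+2*δ)*psi ((N:ℝ)+2*δ) - 2*δ*psi (2*δ) - N)
          - (((N:ℝ)+δ)*psi ((N:ℝ)+δ) - δ*psi δ - N) := by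
      rw [deriv_Lam_eq N (2*δ) h2δ]
      unfold L1fun
      have hsum2 : ∑ k ∈ Finset.range N, psi ((k:ℝ)+1+(2*δ)/2)
          = ∑ k ∈ Finset.range N, psi ((k:ℝ)+1+δ) :=
        Finset.sum_congr rfl (fun k _ => by rw [hhalf k])
      rw [Finset.sum_sub_distrib, hsum2, sum_psi N (2*δ) h2δ, sum_psi N δ hδ]
    rw [hval, ← mainI N hN δ hδ]
    have hexp : (((N:ℝ)+2*δ)*psi ((N:ℝ)+2*δ) - 2*δ*psi (2*δ) - N)
          - (((N:ℝ)+δ)*psi ((N:ℝ)+δ) - δ*psi δ - N)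
        - (((N:ℝ)+2*δ)*Hfun ((N:ℝ)+2*δ) - 2*δ*Hfun (2*δ)
          - (((N:ℝ)+δ)*Hfun ((N:ℝ)+δ) - δ*Hfun δ))
        = ((N:ℝ)+2*δ)*(psi ((N:ℝ)+2*δ) - Hfun ((N:ℝ)+2*δ))
          - 2*δ*(psi (2*δ) - Hfun (2*δ))
          - ((N:ℝ)+δ)*(psi ((N:ℝ)+δ) - Hfun ((N:ℝ)+δ))
          + δ*(psi δ - Hfun δ) := by ring
    rw [hexp]
    have b1 := err1 hδ hδN2δ
    have b2 := err1 hδ hδ2δ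
    have b3 := err1 hδ hδNδ
    have b4 := err1 hδ (le_refl δ)
    have habs : |((N:ℝ)+2*δ)*(psi ((N:ℝ)+2*δ) - Hfun ((N:ℝ)+2*δ))
          - 2*δ*(psi (2*δ) - Hfun (2*δ))
          - ((N:ℝ)+δ)*(psi ((N:ℝ)+δ) - Hfun ((N:ℝ)+δ))
          + δ*(psi δ - Hfun δ)|
        ≤ |((N:ℝ)+2*δ)*(psi ((N:ℝ)+2*δ) - Hfun ((N:ℝ)+2*δ))|
          + |2*δ*(psi (2*δ) - Hfun (2*δ))|
          + |((N:ℝ)+δ)*(psi ((N:ℝ)+δ) - Hfun ((N:ℝ)+δ))|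
          + |δ*(psi δ - Hfun δ)| := by
      calc _ ≤ |((N:ℝ)+2*δ)*(psi ((N:ℝ)+2*δ) - Hfun ((N:ℝ)+2*δ))
          - 2*δ*(psi (2*δ) - Hfun (2*δ))
          - ((N:ℝ)+δ)*(psi ((N:ℝ)+δ) - Hfun ((N:ℝ)+δ))|
          + |δ*(psi δ - Hfun δ)| := abs_add_le _ _
      _ ≤ (|((N:ℝ)+2*δ)*(psi ((N:ℝ)+2*δ) - Hfun ((N:ℝ)+2*δ))
          - 2*δ*(psi (2*δ) - Hfun (2*δ))|
          + |((N:ℝ)+δ)*(psi ((N:ℝ)+δ) - Hfun ((N:ℝ)+δ))|)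
          + |δ*(psi δ - Hfun δ)| := by gcongr; exact abs_sub _ _
      _ ≤ ((|((N:ℝ)+2*δ)*(psi ((N:ℝ)+2*δ) - Hfun ((N:ℝ)+2*δ))|
          + |2*δ*(psi (2*δ) - Hfun (2*δ))|)
          + |((N:ℝ)+δ)*(psi ((N:ℝ)+δ) - Hfun ((N:ℝ)+δ))|)
          + |δ*(psi δ - Hfun δ)| := by gcongr; exact abs_sub _ _
      _ = _ := by ring
    refine habs.trans ?_
    have hpos : (0:ℝ) < 1/δ^3 := by positivity
    have e : (100:ℝ)/δ^3 = 100*(1/δ^3) := by ring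
    have e2 : (2:ℝ)/δ^3 = 2*(1/δ^3) := by ring
    rw [e]
    rw [e2] at b1 b2 b3 b4
    linarith
  · -- second derivative
    have hval : deriv (deriv (CbetaE.Lam 2 N)) (2*δ)
        = (psi ((N:ℝ)+2*δ) + ((N:ℝ)+2*δ)*psiD ((N:ℝ)+2*δ) - psi (2*δ) - 2*δ*psiD (2*δ))
          - (1/2)*(psi ((N:ℝ)+δ) + ((N:ℝ)+δ)*psiD ((N:ℝ)+δ) - psi δ - δ*psiD δ) := by
      rw [deriv_deriv_Lam N (2*δ) h2δ]
      have hsumD2 : ∑ k ∈ Finset.range N, psiD ((k:ℝ)+1+(2*δ)/2) * (1/2)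
          = (∑ k ∈ Finset.range N, psiD ((k:ℝ)+1+δ)) * (1/2) := by
        rw [← Finset.sum_mul]
        exact congrArg (· * (1/2)) (Finset.sum_congr rfl (fun k _ => by rw [hhalf k]))
      rw [Finset.sum_sub_distrib, hsumD2, sum_psiD N (2*δ) h2δ, sum_psiD N δ hδ]
      ring
    rw [hval, ← mainII N hN δ hδ]
    have hexp : (psi ((N:ℝ)+2*δ) + ((N:ℝ)+2*δ)*psiD ((N:ℝ)+2*δ) - psi (2*δ) - 2*δ*psiD (2*δ))
          - (1/2)*(psi ((N:ℝ)+δ) + ((N:ℝ)+δ)*psiD ((N:ℝ)+δ) - psi δ - δ*psiD δ)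
        - ((Hfun ((N:ℝ)+2*δ) + ((N:ℝ)+2*δ)*Ffun ((N:ℝ)+2*δ) - Hfun (2*δ) - 2*δ*Ffun (2*δ))
          - (1/2)*(Hfun ((N:ℝ)+δ) + ((N:ℝ)+δ)*Ffun ((N:ℝ)+δ) - Hfun δ - δ*Ffun δ))
        = ((psi ((N:ℝ)+2*δ) - Hfun ((N:ℝ)+2*δ))
            + ((N:ℝ)+2*δ)*(psiD ((N:ℝ)+2*δ) - Ffun ((N:ℝ)+2*δ))
            - (psi (2*δ) - Hfun (2*δ)) - 2*δ*(psiD (2*δ) - Ffun (2*δ)))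
          - (1/2)*((psi ((N:ℝ)+δ) - Hfun ((N:ℝ)+δ))
            + ((N:ℝ)+δ)*(psiD ((N:ℝ)+δ) - Ffun ((N:ℝ)+δ))
            - (psi δ - Hfun δ) - δ*(psiD δ - Ffun δ)) := by ring
    rw [hexp]
    have c1 := err0 hδ hδN2δ
    have c2 := errD hδ hδN2δ
    have c3 := err0 hδ hδ2δ
    have c4 := errD hδ hδ2δ
    have c5 := err0 hδ hδNδ
    have c6 := errD hδ hδNδ
    have c7 := err0 hδ (le_refl δ)
    have c8 := errD hδ (le_refl δ)
    set X := (psi ((N:ℝ)+2*δ) - Hfun ((N:ℝ)+2*δ))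
            + ((N:ℝ)+2*δ)*(psiD ((N:ℝ)+2*δ) - Ffun ((N:ℝ)+2*δ))
            - (psi (2*δ) - Hfun (2*δ)) - 2*δ*(psiD (2*δ) - Ffun (2*δ)) with hX
    set Y := (psi ((N:ℝ)+δ) - Hfun ((N:ℝ)+δ))
            + ((N:ℝ)+δ)*(psiD ((N:ℝ)+δ) - Ffun ((N:ℝ)+δ))
            - (psi δ - Hfun δ) - δ*(psiD δ - Ffun δ) with hY
    have hXb : |X| ≤ 6/δ^4 := by
      have h1 : |(psi ((N:ℝ)+2*δ) - Hfun ((N:ℝ)+2*δ))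
            + ((N:ℝ)+2*δ)*(psiD ((N:ℝ)+2*δ) - Ffun ((N:ℝ)+2*δ))|
          ≤ 2/δ^4 + 1/δ^4 := (abs_add_le _ _).trans (add_le_add c1 c2)
      have h2 : |(psi ((N:ℝ)+2*δ) - Hfun ((N:ℝ)+2*δ))
            + ((N:ℝ)+2*δ)*(psiD ((N:ℝ)+2*δ) - Ffun ((N:ℝ)+2*δ))
            - (psi (2*δ) - Hfun (2*δ))|
          ≤ (2/δ^4 + 1/δ^4) + 2/δ^4 := (abs_sub _ _).trans (add_le_add h1 c3)
      have h3 : |X| ≤ ((2/δ^4 + 1/δ^4) + 2/δ^4) + 1/δ^4 := by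
        rw [hX]
        exact (abs_sub _ _).trans (add_le_add h2 c4)
      refine h3.trans (le_of_eq ?_)
      ring
    have hYb : |Y| ≤ 6/δ^4 := by
      have h1 : |(psi ((N:ℝ)+δ) - Hfun ((N:ℝ)+δ))
            + ((N:ℝ)+δ)*(psiD ((N:ℝ)+δ) - Ffun ((N:ℝ)+δ))|
          ≤ 2/δ^4 + 1/δ^4 := (abs_add_le _ _).trans (add_le_add c5 c6)
      have h2 : |(psi ((N:ℝ)+δ) - Hfun ((N:ℝ)+δ))
            + ((N:ℝ)+δ)*(psiD ((N:ℝ)+δ) - Ffun ((N:ℝ)+δ))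
            - (psi δ - Hfun δ)|
          ≤ (2/δ^4 + 1/δ^4) + 2/δ^4 := (abs_sub _ _).trans (add_le_add h1 c7)
      have h3 : |Y| ≤ ((2/δ^4 + 1/δ^4) + 2/δ^4) + 1/δ^4 := by
        rw [hY]
        exact (abs_sub _ _).trans (add_le_add h2 c8)
      refine h3.trans (le_of_eq ?_)
      ring
    have hfin : |X - (1/2)*Y| ≤ |X| + (1/2)*|Y| := by
      refine (abs_sub _ _).trans ?_
      rw [abs_mul]
      gcongr
      rw [abs_of_nonneg]
      norm_num
    refine (hfin.trans ?_)
    have hpos : (0:ℝ) < 1/δ^4 := by positivity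
    have e : (100:ℝ)/δ^4 = 100*(1/δ^4) := by ring
    have e6 : (6:ℝ)/δ^4 = 6*(1/δ^4) := by ring
    rw [e]
    rw [e6] at hXb hYb
    linarith


end PsiAux
open CbetaE in
/-- Estimates of the mean and the variance under Hua–Pickrell measures, case `β = 2`
(Proposition 2.4): asymptotics of `Λ'_{N,2}(2δ)` and `Λ''_{N,2}(2δ)`. -/
theorem mean_variance_estimates_beta_two :
    ∃ C : ℝ, ∀ N : ℕ, 1 ≤ N → ∀ δ : ℝ, 0 < δ →
      |deriv (Lam 2 N) (2 * δ) -
          (δ * Real.log ((N : ℝ) / (4 * δ))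
            + (N : ℝ) * ((1 + 2 * δ / N) * Real.log (1 + 2 * δ / N)
                - (1 + δ / N) * Real.log (1 + δ / N))
            + 1 / 12 * (1 / ((N : ℝ) + δ) - 1 / (2 * δ) - 1 / ((N : ℝ) + 2 * δ)))|
        ≤ C / δ ^ 3 ∧
      |deriv (deriv (Lam 2 N)) (2 * δ) -
          (1 / 2 * Real.log ((N : ℝ) / (4 * δ))
            + (Real.log (1 + 2 * δ / N) - 1 / 2 * Real.log (1 + δ / N))
            + 1 / 12 * (1 / ((N : ℝ) + 2 * δ) ^ 2 - 1 / (2 * ((N : ℝ) + δ) ^ 2)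
                + 1 / (4 * δ ^ 2)))|
        ≤ C / δ ^ 4 := by
  exact PsiAux.final
end
end
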